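/- arXiv:2505.10606 — 3 statements merged into one kernel-verified Lean document; each statement's English description precedes it below -/
import Mathlib

section
/- Let Σ be a finite alphabet and let T be a compact decoder-only Transformer over Σ. Then for every ε > 0 there exists δ > 0 such that for every n ∈ ℕ and every pair of sequences α, β ∈ Σ^n with the same last token (α_n = β_n), if d_H(α, β) ≤ δ then ‖T(α) − T(β)‖_∞ ≤ ε, where the output distributions are regarded as vectors in ℝ^Σ. -/
open Finset Filter

open Classical in
/-- Relative Hamming distance between two finite sequences. -/
noncomputable def relHamming {A : Type*} {n : ℕ} (α β : Fin n → A) : ℝ :=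
  ((Finset.univ.filter (fun i => α i ≠ β i)).card : ℝ) / n

/-- Relative Hamming distance between two infinite sequences (1-indexed:
position `n ≥ 1` of the sequence `α : ℕ → A` is `α n`). -/
noncomputable def relHammingInf {A : Type*} (α β : ℕ → A) : ℝ :=
  Filter.liminf
    (fun n : ℕ => relHamming (fun i : Fin n => α (i.val + 1)) (fun i : Fin n => β (i.val + 1)))
    Filter.atTop

/-- A `d`-dimensional decoder-only attention layer. -/
structure AttentionLayer (d : ℕ) where
  p : ℕ → ℕ → (Fin d → ℝ)
  val : (Fin d → ℝ) → (Fin d → ℝ)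
  w : (Fin d → ℝ) → (Fin d → ℝ) → (Fin d → ℝ) → ℝ
  F : (Fin d → ℝ) → (Fin d → ℝ) → (Fin d → ℝ)
  w_pos : ∀ x y z, 0 < w x y z
  val_cont : Continuous val
  w_cont : Continuous fun t : (Fin d → ℝ) × (Fin d → ℝ) × (Fin d → ℝ) => w t.1 t.2.1 t.2.2
  F_cont : Continuous fun t : (Fin d → ℝ) × (Fin d → ℝ) => F t.1 t.2

/-- A positional encoding is compact if its range is contained in a compact set. -/
def AttentionLayer.CompactPE {d : ℕ} (L : AttentionLayer d) : Prop :=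
  ∃ K : Set (Fin d → ℝ), IsCompact K ∧ ∀ i j : ℕ, L.p i j ∈ K

/-- The `j`-th attention vector computed by the layer on input `x`. -/
noncomputable def AttentionLayer.attn {d : ℕ} (L : AttentionLayer d) {n : ℕ}
    (x : Fin n → (Fin d → ℝ)) (j : Fin n) : Fin d → ℝ :=
  (∑ i ∈ Finset.Iic j, L.w (x i) (x j) (L.p i.val j.val))⁻¹ •
    ∑ i ∈ Finset.Iic j, L.w (x i) (x j) (L.p i.val j.val) • L.val (x i)

/-- The output sequence of the layer on input `x`. -/
noncomputable def AttentionLayer.apply {d : ℕ} (L : AttentionLayer d) {n : ℕ}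
    (x : Fin n → (Fin d → ℝ)) : Fin n → (Fin d → ℝ) :=
  fun j => L.F (L.attn x j) (x j)

/-- `sim(x, x̂)`: the minimal `δ ≥ 0` such that `‖x_i − x̂_i‖ ≤ δ` for at least `(1−δ)n`
indices `i`. -/
noncomputable def simDist {d n : ℕ} (x y : Fin n → (Fin d → ℝ)) : ℝ :=
  sInf {δ : ℝ | 0 ≤ δ ∧
    (1 - δ) * n ≤ ((Finset.univ.filter (fun i => ‖x i - y i‖ ≤ δ)).card : ℝ)}

/-- Sequential application of a list of attention layers. -/
noncomputable def applyLayers {d : ℕ} (Ls : List (AttentionLayer d)) {n : ℕ}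
    (x : Fin n → (Fin d → ℝ)) : Fin n → (Fin d → ℝ) :=
  Ls.foldl (fun v L => L.apply v) x

/-- A decoder-only Transformer over a finite alphabet `A`. -/
structure Transformer (A : Type*) [Fintype A] (d : ℕ) where
  embed : A → ℕ → (Fin d → ℝ)
  layers : List (AttentionLayer d)
  proj : (Fin d → ℝ) → (A → ℝ)
  proj_cont : Continuous proj
  proj_nonneg : ∀ y a, 0 ≤ proj y a
  proj_sum : ∀ y, ∑ a, proj y a = 1

/-- The output probability distribution (as a vector in `ℝ^A`) of the Transformer on a
nonempty input sequence. -/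
noncomputable def Transformer.eval {A : Type*} [Fintype A] {d : ℕ} (T : Transformer A d)
    {n : ℕ} (α : Fin (n + 1) → A) : A → ℝ :=
  T.proj (applyLayers T.layers (fun j => T.embed (α j) j.val) (Fin.last n))

/-- A Transformer is compact if its input embedding has range in a compact set and all of
its layers have compact positional encoding. -/
def Transformer.IsCompactT {A : Type*} [Fintype A] {d : ℕ} (T : Transformer A d) : Prop :=
  (∃ K : Set (Fin d → ℝ), IsCompact K ∧ ∀ (a : A) (i : ℕ), T.embed a i ∈ K) ∧
  ∀ L ∈ T.layers, L.CompactPE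

/-- `T` eventually learns the infinite sequence `α` (1-indexed: position `n ≥ 1` is `α n`). -/
def EventuallyLearns {A : Type*} [Fintype A] {d : ℕ} (T : Transformer A d) (α : ℕ → A) :
    Prop :=
  ∃ ε : ℝ, 0 < ε ∧ ∃ n₀ : ℕ, ∀ n ≥ n₀, ∀ σ : A, σ ≠ α (n + 2) →
    T.eval (fun i : Fin (n + 1) => α (i.val + 1)) σ + ε ≤
      T.eval (fun i : Fin (n + 1) => α (i.val + 1)) (α (n + 2))

set_option maxHeartbeats 1600000

theorem key_uc {E F : Type*} [PseudoMetricSpace E] [PseudoMetricSpace F] {s : Set E}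
    (hs : IsCompact s) {f : E → F} (hf : Continuous f) {ε : ℝ} (hε : 0 < ε) :
    ∃ δ > 0, ∀ x ∈ s, ∀ y ∈ s, dist x y ≤ δ → dist (f x) (f y) ≤ ε := by
  have h := hs.uniformContinuousOn_of_continuous hf.continuousOn
  rw [Metric.uniformContinuousOn_iff] at h
  obtain ⟨δ, hδ, H⟩ := h ε hε
  exact ⟨δ/2, by linarith, fun x hx y hy hxy =>
    (H x hx y hy (lt_of_le_of_lt hxy (by linarith))).le⟩

theorem layer_lemma {d : ℕ} (L : AttentionLayer d) (hL : L.CompactPE)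
    (K : Set (Fin d → ℝ)) (hK : IsCompact K) :
    ∃ K' : Set (Fin d → ℝ), IsCompact K' ∧
      (∀ (n : ℕ) (x : Fin n → Fin d → ℝ), (∀ i, x i ∈ K) → ∀ j, L.apply x j ∈ K') ∧
      ∀ ε : ℝ, 0 < ε → ∃ δ : ℝ, 0 < δ ∧ ∃ θ : ℝ, 0 < θ ∧
        ∀ (n : ℕ) (x y : Fin n → Fin d → ℝ),
        (∀ i, x i ∈ K) → (∀ i, y i ∈ K) →
        ∀ S : Finset (Fin n), (∀ i, i ∉ S → ‖x i - y i‖ ≤ δ) →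
        ∀ j, j ∉ S → ((S.filter (fun i => i ≤ j)).card : ℝ) ≤ θ * (j.val + 1) →
        ‖L.apply x j - L.apply y j‖ ≤ ε := by
  classical
  obtain ⟨P, hPc, hPmem⟩ := hL
  set K₀ : Set (Fin d → ℝ) := insert 0 K with hK₀def
  have hK₀ : IsCompact K₀ := hK.insert 0
  have hKK₀ : K ⊆ K₀ := Set.subset_insert _ _
  set P₀ : Set (Fin d → ℝ) := insert 0 P with hP₀def
  have hP₀ : IsCompact P₀ := hPc.insert 0
  set Q : Set ((Fin d → ℝ) × (Fin d → ℝ) × (Fin d → ℝ)) := K₀ ×ˢ K₀ ×ˢ P₀ with hQdef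
  have hQ : IsCompact Q := hK₀.prod (hK₀.prod hP₀)
  have hQne : Q.Nonempty := ⟨(0, 0, 0), by simp [hQdef, hK₀def, hP₀def]⟩
  set g : ((Fin d → ℝ) × (Fin d → ℝ) × (Fin d → ℝ)) → ℝ := fun t => L.w t.1 t.2.1 t.2.2
    with hgdef
  obtain ⟨t₁, ht₁, hmin⟩ := hQ.exists_isMinOn hQne L.w_cont.continuousOn
  obtain ⟨t₂, ht₂, hmax⟩ := hQ.exists_isMaxOn hQne L.w_cont.continuousOn
  set c : ℝ := g t₁ with hcdef
  set C : ℝ := g t₂ with hCdef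
  have hc : 0 < c := L.w_pos _ _ _
  have hcC : c ≤ C := hmax ht₁
  have hC : 0 < C := lt_of_lt_of_le hc hcC
  have hwlb : ∀ t ∈ Q, c ≤ g t := fun t ht => hmin ht
  have hwub : ∀ t ∈ Q, g t ≤ C := fun t ht => hmax ht
  obtain ⟨M₀, hM₀⟩ := hK₀.exists_bound_of_continuousOn L.val_cont.continuousOn
  set M : ℝ := max M₀ 1 with hMdef
  have hM1 : (1:ℝ) ≤ M := le_max_right _ _
  have hM : 0 < M := lt_of_lt_of_le one_pos hM1
  have hMval : ∀ u ∈ K₀, ‖L.val u‖ ≤ M := fun u hu => (hM₀ u hu).trans (le_max_left _ _)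
  set A : Set (Fin d → ℝ) := Metric.closedBall 0 M with hAdef
  have hA : IsCompact A := isCompact_closedBall 0 M
  -- attention output is bounded by M
  have hattn : ∀ (n : ℕ) (x : Fin n → Fin d → ℝ), (∀ i, x i ∈ K₀) → ∀ j,
      L.attn x j ∈ A := by
    intro n x hx j
    set w : Fin n → ℝ := fun i => L.w (x i) (x j) (L.p i.val j.val) with hwdef
    have hwpos : ∀ i, 0 < w i := fun i => L.w_pos _ _ _
    have hWpos : 0 < ∑ i ∈ Finset.Iic j, w i :=
      Finset.sum_pos (fun i _ => hwpos i) ⟨j, Finset.mem_Iic.2 le_rfl⟩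
    have h1 : ‖∑ i ∈ Finset.Iic j, w i • L.val (x i)‖ ≤
        ∑ i ∈ Finset.Iic j, w i * M := by
      refine (norm_sum_le _ _).trans (Finset.sum_le_sum fun i _ => ?_)
      rw [norm_smul, Real.norm_eq_abs, abs_of_pos (hwpos i)]
      exact mul_le_mul_of_nonneg_left (hMval _ (hx i)) (hwpos i).le
    rw [hAdef, Metric.mem_closedBall, dist_zero_right]
    show ‖(∑ i ∈ Finset.Iic j, w i)⁻¹ • ∑ i ∈ Finset.Iic j, w i • L.val (x i)‖ ≤ M
    rw [norm_smul, Real.norm_eq_abs, abs_of_pos (inv_pos.2 hWpos)]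
    calc (∑ i ∈ Finset.Iic j, w i)⁻¹ * ‖∑ i ∈ Finset.Iic j, w i • L.val (x i)‖
        ≤ (∑ i ∈ Finset.Iic j, w i)⁻¹ * (∑ i ∈ Finset.Iic j, w i * M) :=
          mul_le_mul_of_nonneg_left h1 (inv_pos.2 hWpos).le
      _ = M := by rw [← Finset.sum_mul]; field_simp
  refine ⟨(fun t : (Fin d → ℝ) × (Fin d → ℝ) => L.F t.1 t.2) '' (A ×ˢ K₀),
    (hA.prod hK₀).image L.F_cont, ?_, ?_⟩
  · intro n x hx j
    exact ⟨(L.attn x j, x j),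
      Set.mk_mem_prod (hattn n x (fun i => hKK₀ (hx i)) j) (hKK₀ (hx j)), rfl⟩
  intro ε hε
  obtain ⟨ε₁, hε₁, hF⟩ := key_uc (hA.prod hK₀) L.F_cont hε
  obtain ⟨δv, hδv, hval⟩ := key_uc hK₀ L.val_cont (show (0:ℝ) < ε₁/4 by linarith)
  have hρ' : 0 < c * ε₁ / (8 * M) := by positivity
  obtain ⟨δw, hδw, hw⟩ := key_uc hQ L.w_cont hρ'
  refine ⟨min (min δv δw) ε₁, by positivity, c * ε₁ / (8 * M * C), by positivity, ?_⟩
  intro n x y hx hy S hS j hjS hjθ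
  have hxK : ∀ i, x i ∈ K₀ := fun i => hKK₀ (hx i)
  have hyK : ∀ i, y i ∈ K₀ := fun i => hKK₀ (hy i)
  set w : Fin n → ℝ := fun i => L.w (x i) (x j) (L.p i.val j.val) with hwdef
  set w' : Fin n → ℝ := fun i => L.w (y i) (y j) (L.p i.val j.val) with hw'def
  set v : Fin n → (Fin d → ℝ) := fun i => L.val (x i) with hvdef
  set v' : Fin n → (Fin d → ℝ) := fun i => L.val (y i) with hv'def
  set W : ℝ := ∑ i ∈ Finset.Iic j, w i with hWdef
  set W' : ℝ := ∑ i ∈ Finset.Iic j, w' i with hW'def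
  have hQx : ∀ i, (x i, x j, L.p i.val j.val) ∈ Q :=
    fun i => ⟨hxK i, hxK j, Set.mem_insert_of_mem _ (hPmem _ _)⟩
  have hQy : ∀ i, (y i, y j, L.p i.val j.val) ∈ Q :=
    fun i => ⟨hyK i, hyK j, Set.mem_insert_of_mem _ (hPmem _ _)⟩
  have hwc : ∀ i, c ≤ w i := fun i => hwlb _ (hQx i)
  have hwC : ∀ i, w i ≤ C := fun i => hwub _ (hQx i)
  have hw'c : ∀ i, c ≤ w' i := fun i => hwlb _ (hQy i)
  have hw'C : ∀ i, w' i ≤ C := fun i => hwub _ (hQy i)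
  set N : ℝ := (j.val : ℝ) + 1 with hNdef
  have hNpos : 0 < N := by positivity
  have hcard : ((Finset.Iic j).card : ℝ) = N := by rw [Fin.card_Iic]; push_cast [hNdef]; ring
  have hWlb : N * c ≤ W := by
    have h1 : (Finset.Iic j).card • c ≤ ∑ i ∈ Finset.Iic j, w i :=
      Finset.card_nsmul_le_sum _ _ _ (fun i _ => hwc i)
    rw [nsmul_eq_mul, hcard] at h1
    exact h1
  have hW'lb : N * c ≤ W' := by
    have h1 : (Finset.Iic j).card • c ≤ ∑ i ∈ Finset.Iic j, w' i :=
      Finset.card_nsmul_le_sum _ _ _ (fun i _ => hw'c i)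
    rw [nsmul_eq_mul, hcard] at h1
    exact h1
  have hWpos : 0 < W := lt_of_lt_of_le (by positivity) hWlb
  have hW'pos : 0 < W' := lt_of_lt_of_le (by positivity) hW'lb
  have hWinv : W⁻¹ ≤ (N * c)⁻¹ := by
    exact inv_anti₀ (by positivity) hWlb
  -- bad set
  set B : Finset (Fin n) := (Finset.Iic j).filter (fun i => i ∈ S) with hBdef
  have hBsub : B ⊆ S.filter (fun i => i ≤ j) := by
    intro i hi
    rw [hBdef, Finset.mem_filter, Finset.mem_Iic] at hi
    rw [Finset.mem_filter]
    exact ⟨hi.2, hi.1⟩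
  have hBcard : (B.card : ℝ) ≤ c * ε₁ / (8 * M * C) * N := by
    refine le_trans ?_ hjθ
    exact_mod_cast Nat.cast_le.2 (Finset.card_le_card hBsub)
  -- value bounds
  have hvgood : ∀ i, i ∉ S → ‖v i - v' i‖ ≤ ε₁ / 4 := by
    intro i hi
    have h1 := hval (x i) (hxK i) (y i) (hyK i) ?_
    · rwa [dist_eq_norm] at h1
    · rw [dist_eq_norm]
      exact (hS i hi).trans ((min_le_left _ _).trans (min_le_left _ _))
  have hvbound : ∀ i, ‖v i - v' i‖ ≤ 2 * M := by
    intro i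
    calc ‖v i - v' i‖ ≤ ‖v i‖ + ‖v' i‖ := norm_sub_le _ _
      _ ≤ 2 * M := by
          have := hMval _ (hxK i); have := hMval _ (hyK i)
          simp only [hvdef, hv'def] at *
          linarith
  -- weight difference bounds
  have hwgood : ∀ i, i ∉ S → |w i - w' i| ≤ c * ε₁ / (8 * M) := by
    intro i hi
    have hd : dist ((x i, x j, L.p i.val j.val) : (Fin d → ℝ) × (Fin d → ℝ) × (Fin d → ℝ))
        (y i, y j, L.p i.val j.val) ≤ δw := by
      rw [Prod.dist_eq, Prod.dist_eq]
      have h1 : dist (x i) (y i) ≤ δw := by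
        rw [dist_eq_norm]
        exact (hS i hi).trans ((min_le_left _ _).trans (min_le_right _ _))
      have h2 : dist (x j) (y j) ≤ δw := by
        rw [dist_eq_norm]
        exact (hS j hjS).trans ((min_le_left _ _).trans (min_le_right _ _))
      have h3 : dist (L.p i.val j.val) (L.p i.val j.val) = 0 := dist_self _
      apply max_le h1 (max_le h2 (by rw [h3]; exact hδw.le))
    have h4 := hw _ (hQx i) _ (hQy i) hd
    rwa [Real.dist_eq] at h4
  have hwbad : ∀ i, |w i - w' i| ≤ C := by
    intro i
    rw [abs_sub_le_iff]
    constructor <;> [linarith [hwC i, hw'c i, hc]; linarith [hwc i, hw'C i, hc]]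
  -- sum of weight differences
  have hsumwdiff : ∑ i ∈ Finset.Iic j, |w i - w' i| ≤
      (c * ε₁ / (8 * M * C) * N) * C + N * (c * ε₁ / (8 * M)) := by
    rw [← Finset.sum_filter_add_sum_filter_not (Finset.Iic j) (fun i => i ∈ S)]
    have hbad : ∑ i ∈ B, |w i - w' i| ≤ (c * ε₁ / (8 * M * C) * N) * C := by
      have h1 : ∑ i ∈ B, |w i - w' i| ≤ B.card • C :=
        Finset.sum_le_card_nsmul _ _ _ (fun i _ => hwbad i)
      rw [nsmul_eq_mul] at h1
      exact h1.trans (mul_le_mul_of_nonneg_right hBcard hC.le)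
    have hgood : ∑ i ∈ (Finset.Iic j).filter (fun i => i ∉ S), |w i - w' i| ≤
        N * (c * ε₁ / (8 * M)) := by
      have h1 : ∑ i ∈ (Finset.Iic j).filter (fun i => i ∉ S), |w i - w' i| ≤
          ((Finset.Iic j).filter (fun i => i ∉ S)).card • (c * ε₁ / (8 * M)) := by
        refine Finset.sum_le_card_nsmul _ _ _ (fun i hi => ?_)
        rw [Finset.mem_filter] at hi
        exact hwgood i hi.2
      rw [nsmul_eq_mul] at h1
      refine h1.trans (mul_le_mul_of_nonneg_right ?_ hρ'.le)
      calc (((Finset.Iic j).filter (fun i => i ∉ S)).card : ℝ)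
          ≤ ((Finset.Iic j).card : ℝ) :=
            Nat.cast_le.2 (Finset.card_le_card (Finset.filter_subset _ _))
        _ = N := hcard
    exact add_le_add hbad hgood
  -- attention as a normalized sum
  have ha : L.attn x j = ∑ i ∈ Finset.Iic j, (W⁻¹ * w i) • v i := by
    simp only [hWdef, hwdef, hvdef, AttentionLayer.attn, Finset.smul_sum, smul_smul]
  have ha' : L.attn y j = ∑ i ∈ Finset.Iic j, (W'⁻¹ * w' i) • v' i := by
    simp only [hW'def, hw'def, hv'def, AttentionLayer.attn, Finset.smul_sum, smul_smul]
  have key : L.attn x j - L.attn y j = ∑ i ∈ Finset.Iic j,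
      ((W⁻¹ * w i) • (v i - v' i) + ((W⁻¹ * w i) - (W'⁻¹ * w' i)) • v' i) := by
    rw [ha, ha', ← Finset.sum_sub_distrib]
    exact Finset.sum_congr rfl fun i _ => by module
  have normbound : ‖L.attn x j - L.attn y j‖ ≤
      ∑ i ∈ Finset.Iic j,
        (W⁻¹ * w i * ‖v i - v' i‖ + |W⁻¹ * w i - W'⁻¹ * w' i| * M) := by
    rw [key]
    refine (norm_sum_le _ _).trans (Finset.sum_le_sum fun i _ => ?_)
    refine (norm_add_le _ _).trans ?_
    rw [norm_smul, norm_smul, Real.norm_eq_abs, Real.norm_eq_abs,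
      abs_of_pos (mul_pos (inv_pos.2 hWpos) (lt_of_lt_of_le hc (hwc i)))]
    have h2 : ‖v' i‖ ≤ M := hMval _ (hyK i)
    gcongr
  have hsum1 : ∑ i ∈ Finset.Iic j, W⁻¹ * w i = 1 := by
    rw [← Finset.mul_sum]
    exact inv_mul_cancel₀ hWpos.ne'
  have hT1 : ∑ i ∈ Finset.Iic j, W⁻¹ * w i * ‖v i - v' i‖ ≤ ε₁ / 2 := by
    rw [← Finset.sum_filter_add_sum_filter_not (Finset.Iic j) (fun i => i ∈ S)]
    have hbad : ∑ i ∈ (Finset.Iic j).filter (fun i => i ∈ S),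
        W⁻¹ * w i * ‖v i - v' i‖ ≤ ε₁ / 4 := by
      have h1 : ∀ i ∈ B, W⁻¹ * w i * ‖v i - v' i‖ ≤ (N * c)⁻¹ * C * (2 * M) := by
        intro i _
        have h2 : W⁻¹ * w i ≤ (N * c)⁻¹ * C :=
          mul_le_mul hWinv (hwC i) (lt_of_lt_of_le hc (hwc i)).le (by positivity)
        exact mul_le_mul h2 (hvbound i) (norm_nonneg _) (by positivity)
      calc ∑ i ∈ B, W⁻¹ * w i * ‖v i - v' i‖
          ≤ B.card • ((N * c)⁻¹ * C * (2 * M)) := Finset.sum_le_card_nsmul _ _ _ h1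
        _ = (B.card : ℝ) * ((N * c)⁻¹ * C * (2 * M)) := nsmul_eq_mul _ _
        _ ≤ (c * ε₁ / (8 * M * C) * N) * ((N * c)⁻¹ * C * (2 * M)) :=
            mul_le_mul_of_nonneg_right hBcard (by positivity)
        _ = ε₁ / 4 := by
            field_simp
            ring
    have hgood : ∑ i ∈ (Finset.Iic j).filter (fun i => i ∉ S),
        W⁻¹ * w i * ‖v i - v' i‖ ≤ ε₁ / 4 := by
      calc ∑ i ∈ (Finset.Iic j).filter (fun i => i ∉ S), W⁻¹ * w i * ‖v i - v' i‖
          ≤ ∑ i ∈ (Finset.Iic j).filter (fun i => i ∉ S), W⁻¹ * w i * (ε₁ / 4) := by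
            refine Finset.sum_le_sum fun i hi => ?_
            refine mul_le_mul_of_nonneg_left (hvgood i (Finset.mem_filter.1 hi).2) ?_
            exact (mul_pos (inv_pos.2 hWpos) (lt_of_lt_of_le hc (hwc i))).le
        _ ≤ ∑ i ∈ Finset.Iic j, W⁻¹ * w i * (ε₁ / 4) := by
            refine Finset.sum_le_sum_of_subset_of_nonneg (Finset.filter_subset _ _)
              fun i _ _ => ?_
            have := lt_of_lt_of_le hc (hwc i)
            positivity
        _ = ε₁ / 4 := by rw [← Finset.sum_mul, hsum1, one_mul]
    linarith
  set D : ℝ := ∑ i ∈ Finset.Iic j, |w i - w' i| with hDdef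
  have hDnn : 0 ≤ D := Finset.sum_nonneg fun i _ => abs_nonneg _
  have hWW' : |W' - W| ≤ D := by
    calc |W' - W| = |∑ i ∈ Finset.Iic j, (w' i - w i)| := by
          rw [Finset.sum_sub_distrib]
      _ ≤ ∑ i ∈ Finset.Iic j, |w' i - w i| := Finset.abs_sum_le_sum_abs _ _
      _ = D := Finset.sum_congr rfl fun i _ => abs_sub_comm _ _
  have hT2 : ∑ i ∈ Finset.Iic j, |W⁻¹ * w i - W'⁻¹ * w' i| * M ≤ ε₁ / 2 := by
    have hstep : ∀ i ∈ Finset.Iic j, |W⁻¹ * w i - W'⁻¹ * w' i| * M ≤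
        (W⁻¹ * |w i - w' i| + w' i * (|W' - W| * (W⁻¹ * W'⁻¹))) * M := by
      intro i _
      refine mul_le_mul_of_nonneg_right ?_ hM.le
      have heq : W⁻¹ * w i - W'⁻¹ * w' i =
          W⁻¹ * (w i - w' i) + w' i * ((W' - W) * (W⁻¹ * W'⁻¹)) := by
        field_simp
        ring
      rw [heq]
      refine (abs_add_le _ _).trans (le_of_eq ?_)
      rw [abs_mul, abs_mul, abs_mul, abs_of_pos (inv_pos.2 hWpos),
        abs_of_pos (lt_of_lt_of_le hc (hw'c i)),
        abs_of_pos (mul_pos (inv_pos.2 hWpos) (inv_pos.2 hW'pos))]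
    calc ∑ i ∈ Finset.Iic j, |W⁻¹ * w i - W'⁻¹ * w' i| * M
        ≤ ∑ i ∈ Finset.Iic j,
            (W⁻¹ * |w i - w' i| + w' i * (|W' - W| * (W⁻¹ * W'⁻¹))) * M :=
          Finset.sum_le_sum hstep
      _ = (W⁻¹ * D + W' * (|W' - W| * (W⁻¹ * W'⁻¹))) * M := by
          rw [← Finset.sum_mul, Finset.sum_add_distrib, ← Finset.mul_sum, ← Finset.sum_mul]
      _ = (W⁻¹ * D + |W' - W| * W⁻¹) * M := by
          field_simp
      _ ≤ (W⁻¹ * D + D * W⁻¹) * M := by gcongr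
      _ = 2 * (W⁻¹ * D) * M := by ring
      _ ≤ 2 * ((N * c)⁻¹ * ((c * ε₁ / (8 * M * C) * N) * C + N * (c * ε₁ / (8 * M)))) * M := by
          have h5 : W⁻¹ * D ≤ (N * c)⁻¹ * ((c * ε₁ / (8 * M * C) * N) * C +
              N * (c * ε₁ / (8 * M))) :=
            mul_le_mul hWinv hsumwdiff hDnn (by positivity)
          have h6 : (0:ℝ) ≤ 2 * M := by positivity
          nlinarith [hM]
      _ = ε₁ / 2 := by
          field_simp
          ring
  have hattn_diff : ‖L.attn x j - L.attn y j‖ ≤ ε₁ := by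
    calc ‖L.attn x j - L.attn y j‖
        ≤ ∑ i ∈ Finset.Iic j,
            (W⁻¹ * w i * ‖v i - v' i‖ + |W⁻¹ * w i - W'⁻¹ * w' i| * M) := normbound
      _ = (∑ i ∈ Finset.Iic j, W⁻¹ * w i * ‖v i - v' i‖) +
          ∑ i ∈ Finset.Iic j, |W⁻¹ * w i - W'⁻¹ * w' i| * M := Finset.sum_add_distrib
      _ ≤ ε₁ / 2 + ε₁ / 2 := add_le_add hT1 hT2
      _ = ε₁ := by ring
  have hfin := hF (L.attn x j, x j) (Set.mk_mem_prod (hattn n x hxK j) (hxK j))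
    (L.attn y j, y j) (Set.mk_mem_prod (hattn n y hyK j) (hyK j)) ?_
  · rw [dist_eq_norm] at hfin
    exact hfin
  · rw [Prod.dist_eq]
    refine max_le ?_ ?_
    · rw [dist_eq_norm]; exact hattn_diff
    · rw [dist_eq_norm]
      exact (hS j hjS).trans (min_le_right _ _)




theorem layers_lemma {d : ℕ} (Ls : List (AttentionLayer d)) (hLs : ∀ L ∈ Ls, L.CompactPE)
    (K : Set (Fin d → ℝ)) (hK : IsCompact K) :
    ∃ K' : Set (Fin d → ℝ), IsCompact K' ∧
      (∀ (n : ℕ) (x : Fin n → Fin d → ℝ), (∀ i, x i ∈ K) → ∀ j, applyLayers Ls x j ∈ K') ∧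
      ∀ ε : ℝ, 0 < ε → ∃ δ : ℝ, 0 < δ ∧ ∃ θ : ℝ, 0 < θ ∧
        ∀ (n : ℕ) (x y : Fin n → Fin d → ℝ),
        (∀ i, x i ∈ K) → (∀ i, y i ∈ K) →
        ∀ S : Finset (Fin n), (∀ i, i ∉ S → ‖x i - y i‖ ≤ δ) →
        ∀ j, j ∉ S → ((S.card : ℝ)) ≤ θ * (j.val + 1) →
        ‖applyLayers Ls x j - applyLayers Ls y j‖ ≤ ε := by
  classical
  induction Ls generalizing K with
  | nil =>
    refine ⟨K, hK, ?_, ?_⟩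
    · intro n x hx j; simpa [applyLayers] using hx j
    · intro ε hε
      refine ⟨ε, hε, 1, one_pos, ?_⟩
      intro n x y hx hy S hS j hjS hjθ
      simpa [applyLayers] using hS j hjS
  | cons L Ls ih =>
    obtain ⟨K₁, hK₁, hmem₁, hcont₁⟩ := layer_lemma L (hLs L List.mem_cons_self) K hK
    obtain ⟨K', hK', hmem₂, hcont₂⟩ :=
      ih (fun L' hL' => hLs L' (List.mem_cons_of_mem _ hL')) K₁ hK₁
    refine ⟨K', hK', ?_, ?_⟩
    · intro n x hx j
      have := hmem₂ n (L.apply x) (fun i => hmem₁ n x hx i) j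
      simpa [applyLayers] using this
    · intro ε hε
      obtain ⟨δ₂, hδ₂, θ₂, hθ₂, H₂⟩ := hcont₂ ε hε
      obtain ⟨δ₁, hδ₁, θ₁, hθ₁, H₁⟩ := hcont₁ δ₂ hδ₂
      refine ⟨δ₁, hδ₁, min θ₁ (θ₂ * θ₁ / (1 + 2 * θ₁)), by positivity, ?_⟩
      intro n x y hx hy S hS j hjS hjθ
      have hxK₁ : ∀ i, L.apply x i ∈ K₁ := fun i => hmem₁ n x hx i
      have hyK₁ : ∀ i, L.apply y i ∈ K₁ := fun i => hmem₁ n y hy i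
      have happly : ∀ z : Fin n → Fin d → ℝ,
          applyLayers (L :: Ls) z = applyLayers Ls (L.apply z) := fun z => rfl
      by_cases hSe : S = ∅
      · subst hSe
        have hout : ∀ i, i ∉ (∅ : Finset (Fin n)) →
            ‖L.apply x i - L.apply y i‖ ≤ δ₂ := by
          intro i hi
          refine H₁ n x y hx hy ∅ hS i hi ?_
          simp
          positivity
        have := H₂ n (L.apply x) (L.apply y) hxK₁ hyK₁ ∅ hout j (by simp) (by simp; positivity)
        rw [happly x, happly y]
        exact this
      have hSne : 1 ≤ (S.card : ℝ) := by
        have : 0 < S.card := Finset.card_pos.2 (Finset.nonempty_iff_ne_empty.2 hSe)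
        exact_mod_cast this
      set bad : Finset (Fin n) := Finset.univ.filter
        (fun i => θ₁ * ((i.val : ℝ) + 1) < ((S.filter (fun i' => i' ≤ i)).card : ℝ))
        with hbaddef
      set S₁ : Finset (Fin n) := S ∪ bad with hS₁def
      have hθle : min θ₁ (θ₂ * θ₁ / (1 + 2 * θ₁)) ≤ θ₁ := min_le_left _ _
      have hScard : (S.card : ℝ) ≤ θ₁ * ((j.val : ℝ) + 1) := by
        refine hjθ.trans (mul_le_mul_of_nonneg_right hθle (by positivity))
      -- (a) off S₁, layer outputs are close
      have hout : ∀ i, i ∉ S₁ → ‖L.apply x i - L.apply y i‖ ≤ δ₂ := by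
        intro i hi
        rw [hS₁def, Finset.mem_union, not_or, hbaddef, Finset.mem_filter] at hi
        refine H₁ n x y hx hy S hS i hi.1 ?_
        have h2 := hi.2
        push_neg at h2
        exact h2 (Finset.mem_univ i)
      -- (b) j ∉ S₁
      have hjS₁ : j ∉ S₁ := by
        rw [hS₁def, Finset.mem_union, not_or, hbaddef, Finset.mem_filter]
        refine ⟨hjS, ?_⟩
        push_neg
        intro _
        refine le_trans ?_ hScard
        exact_mod_cast Nat.cast_le.2 (Finset.card_le_card (Finset.filter_subset _ _))
      -- (c) cardinality of S₁
      have hbadcard : (bad.card : ℝ) ≤ (S.card : ℝ) / θ₁ + (S.card : ℝ) := by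
        have ht : (0:ℝ) ≤ (S.card : ℝ) / θ₁ := by positivity
        have hsub : ∀ i ∈ bad, i.val ∈ Finset.range ⌈(S.card : ℝ) / θ₁⌉₊ := by
          intro i hi
          rw [hbaddef, Finset.mem_filter] at hi
          have h1 : θ₁ * ((i.val : ℝ) + 1) < (S.card : ℝ) := by
            refine lt_of_lt_of_le hi.2 ?_
            exact_mod_cast Nat.cast_le.2 (Finset.card_le_card (Finset.filter_subset _ _))
          have h2 : (i.val : ℝ) < (S.card : ℝ) / θ₁ := by
            rw [lt_div_iff₀ hθ₁]
            nlinarith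
          rw [Finset.mem_range]
          exact Nat.lt_ceil.2 h2
        have h3 : bad.card ≤ ⌈(S.card : ℝ) / θ₁⌉₊ := by
          have := Finset.card_le_card_of_injOn (fun i => i.val) (fun i hi => hsub i hi)
            (fun a _ b _ h => Fin.val_injective h)
          simpa using this
        have h4 : ((⌈(S.card : ℝ) / θ₁⌉₊ : ℝ)) < (S.card : ℝ) / θ₁ + 1 :=
          Nat.ceil_lt_add_one ht
        have h5 : (bad.card : ℝ) ≤ (⌈(S.card : ℝ) / θ₁⌉₊ : ℝ) := Nat.cast_le.2 h3
        linarith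
      have hS₁card : (S₁.card : ℝ) ≤ θ₂ * ((j.val : ℝ) + 1) := by
        have h1 : (S₁.card : ℝ) ≤ (S.card : ℝ) + (bad.card : ℝ) := by
          rw [hS₁def]
          exact_mod_cast Nat.cast_le.2 (Finset.card_union_le _ _)
        have h2 : (S.card : ℝ) ≤ θ₂ * θ₁ / (1 + 2 * θ₁) * ((j.val : ℝ) + 1) := by
          refine hjθ.trans (mul_le_mul_of_nonneg_right (min_le_right _ _) (by positivity))
        have h3 : (0:ℝ) < (j.val : ℝ) + 1 := by positivity
        have h4 : (S₁.card : ℝ) ≤ (S.card : ℝ) * (2 + 1 / θ₁) := by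
          have := hbadcard
          have h6 : (S.card : ℝ) / θ₁ = (S.card : ℝ) * (1/θ₁) := by ring
          nlinarith
        refine h4.trans ?_
        have h7 : (2 + 1/θ₁) * (θ₂ * θ₁ / (1 + 2 * θ₁)) = θ₂ := by
          field_simp
          ring
        calc (S.card : ℝ) * (2 + 1/θ₁)
            ≤ (θ₂ * θ₁ / (1 + 2 * θ₁) * ((j.val : ℝ) + 1)) * (2 + 1/θ₁) := by
              refine mul_le_mul_of_nonneg_right h2 ?_
              positivity
          _ = θ₂ * ((j.val : ℝ) + 1) := by
              field_simp
              ring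
      have := H₂ n (L.apply x) (L.apply y) hxK₁ hyK₁ S₁ hout j hjS₁ hS₁card
      rw [happly x, happly y]
      exact this

/-- **Continuity (Theorem 1).** For a compact decoder-only Transformer `T` and every
`ε > 0` there is `δ > 0` such that for all `n` and all sequences `α β` of the same length
with the same last token, `d_H(α, β) ≤ δ` implies `‖T(α) − T(β)‖_∞ ≤ ε`. -/
theorem transformer_continuity {A : Type*} [Fintype A] {d : ℕ} (T : Transformer A d)
    (hT : T.IsCompactT) :
    ∀ ε : ℝ, 0 < ε → ∃ δ : ℝ, 0 < δ ∧ ∀ (n : ℕ) (α β : Fin (n + 1) → A),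
      α (Fin.last n) = β (Fin.last n) → relHamming α β ≤ δ →
      ‖T.eval α - T.eval β‖ ≤ ε := by
    classical
  intro ε hε
  obtain ⟨⟨K₀, hK₀, hembed⟩, hlayers⟩ := hT
  obtain ⟨K', hK', hmem, hcont⟩ := layers_lemma T.layers hlayers K₀ hK₀
  obtain ⟨ε₁, hε₁, hproj⟩ := key_uc hK' T.proj_cont hε
  obtain ⟨δ₁, hδ₁, θ, hθ, H⟩ := hcont ε₁ hε₁
  refine ⟨θ, hθ, ?_⟩
  intro n α β hlast hham
  set x : Fin (n+1) → Fin d → ℝ := fun j => T.embed (α j) j.val with hxdef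
  set y : Fin (n+1) → Fin d → ℝ := fun j => T.embed (β j) j.val with hydef
  set S : Finset (Fin (n+1)) := Finset.univ.filter (fun i => α i ≠ β i) with hSdef
  have hxK : ∀ i, x i ∈ K₀ := fun i => hembed _ _
  have hyK : ∀ i, y i ∈ K₀ := fun i => hembed _ _
  have hS : ∀ i, i ∉ S → ‖x i - y i‖ ≤ δ₁ := by
    intro i hi
    rw [hSdef, Finset.mem_filter] at hi
    push_neg at hi
    have hi2 : α i = β i := hi (Finset.mem_univ i)
    rw [hxdef, hydef]
    simp only [hi2, sub_self, norm_zero]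
    exact hδ₁.le
  have hjS : Fin.last n ∉ S := by
    rw [hSdef, Finset.mem_filter]
    push_neg
    intro _
    exact hlast
  have hrel : relHamming α β = (S.card : ℝ) / (n + 1) := by
    have h : Finset.univ.filter (fun i => α i ≠ β i) = S := hSdef.symm
    rw [relHamming, h]
    push_cast
    ring
  have hcard : (S.card : ℝ) ≤ θ * (((Fin.last n).val : ℝ) + 1) := by
    rw [hrel] at hham
    have h1 : (0:ℝ) < (n:ℝ) + 1 := by positivity
    rw [div_le_iff₀ h1] at hham
    calc (S.card : ℝ) ≤ θ * ((n:ℝ) + 1) := by linarith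
      _ = θ * (((Fin.last n).val : ℝ) + 1) := by rw [Fin.val_last]
  have hmain := H (n+1) x y hxK hyK S hS (Fin.last n) hjS hcard
  have h2 := hproj _ (hmem (n+1) x hxK (Fin.last n)) _ (hmem (n+1) y hyK (Fin.last n))
    (by rw [dist_eq_norm]; exact hmain)
  rw [Transformer.eval, Transformer.eval, ← dist_eq_norm]
  exact h2
end

section
/- Let L be a d-dimensional decoder-only attention layer with compact positional encoding and let K ⊆ ℝ^d be compact. Then for every ε > 0 there exists δ > 0 such that for every n ∈ ℕ and all sequences x, x̂ ∈ K^n: if sim(x, x̂) ≤ δ and ‖x_n − x̂_n‖_∞ ≤ δ, then sim(y, ŷ) ≤ ε and ‖y_n − ŷ_n‖_∞ ≤ ε, where (y_1,…,y_n) = L(x) and (ŷ_1,…,ŷ_n) = L(x̂). -/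
open Finset Filter

lemma simDist_le {d n : ℕ} (x y : Fin n → (Fin d → ℝ)) {ε : ℝ} (h0 : 0 ≤ ε)
    (h : (1 - ε) * n ≤ ((Finset.univ.filter (fun i => ‖x i - y i‖ ≤ ε)).card : ℝ)) :
    simDist x y ≤ ε :=
  csInf_le ⟨0, fun a ha => ha.1⟩ ⟨h0, h⟩

lemma simDist_extract {d n : ℕ} (x y : Fin n → (Fin d → ℝ)) {δ δ' : ℝ}
    (hle : simDist x y ≤ δ) (hlt : δ < δ') :
    (1 - δ') * n ≤ ((Finset.univ.filter (fun i => ‖x i - y i‖ ≤ δ')).card : ℝ) := by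
  classical
  set S : Set ℝ := {δ : ℝ | 0 ≤ δ ∧
    (1 - δ) * n ≤ ((Finset.univ.filter (fun i => ‖x i - y i‖ ≤ δ)).card : ℝ)} with hS
  have hne : S.Nonempty := by
    refine ⟨1, by norm_num, ?_⟩
    simp
  have hbdd : BddBelow S := ⟨0, fun a ha => ha.1⟩
  have : sInf S < δ' := lt_of_le_of_lt hle hlt
  obtain ⟨a, haS, halt⟩ := (csInf_lt_iff hbdd hne).mp this
  have hsub : (Finset.univ.filter (fun i : Fin n => ‖x i - y i‖ ≤ a)) ⊆
      (Finset.univ.filter (fun i => ‖x i - y i‖ ≤ δ')) := by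
    apply Finset.monotone_filter_right
    intro i _ hi
    exact hi.trans halt.le
  have hcard := Finset.card_le_card hsub
  calc (1 - δ') * n ≤ (1 - a) * n := by
        apply mul_le_mul_of_nonneg_right _ (Nat.cast_nonneg n)
        linarith
    _ ≤ _ := haS.2
    _ ≤ _ := by exact_mod_cast hcard

lemma avg_norm_le {d : ℕ} {ι : Type*} (s : Finset ι) (hs : s.Nonempty)
    (w : ι → ℝ) (v : ι → Fin d → ℝ) {m V : ℝ} (hm : 0 < m)
    (hw1 : ∀ i ∈ s, m ≤ w i) (hv : ∀ i ∈ s, ‖v i‖ ≤ V) :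
    ‖(∑ i ∈ s, w i)⁻¹ • ∑ i ∈ s, w i • v i‖ ≤ V := by
  have hwpos : ∀ i ∈ s, 0 < w i := fun i hi => lt_of_lt_of_le hm (hw1 i hi)
  have hS : 0 < ∑ i ∈ s, w i := Finset.sum_pos hwpos hs
  have h1 : ‖∑ i ∈ s, w i • v i‖ ≤ ∑ i ∈ s, w i * V := by
    refine (norm_sum_le _ _).trans (Finset.sum_le_sum fun i hi => ?_)
    rw [norm_smul, Real.norm_eq_abs, abs_of_pos (hwpos i hi)]
    exact mul_le_mul_of_nonneg_left (hv i hi) (hwpos i hi).le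
  rw [norm_smul, Real.norm_eq_abs, abs_of_pos (inv_pos.mpr hS)]
  rw [← Finset.sum_mul] at h1
  calc (∑ i ∈ s, w i)⁻¹ * ‖∑ i ∈ s, w i • v i‖
      ≤ (∑ i ∈ s, w i)⁻¹ * ((∑ i ∈ s, w i) * V) :=
        mul_le_mul_of_nonneg_left h1 (inv_pos.mpr hS).le
    _ = V := by field_simp

set_option maxHeartbeats 2000000 in
lemma avg_diff {d : ℕ} {ι : Type*} [DecidableEq ι] (s : Finset ι) (hs : s.Nonempty)
    (w w' : ι → ℝ) (v v' : ι → Fin d → ℝ) (m M V ω η : ℝ)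
    (hm : 0 < m) (hω : 0 ≤ ω) (hη : 0 ≤ η) (hV : 0 ≤ V)
    (hw1 : ∀ i ∈ s, m ≤ w i) (hw2 : ∀ i ∈ s, w i ≤ M)
    (hw1' : ∀ i ∈ s, m ≤ w' i) (hw2' : ∀ i ∈ s, w' i ≤ M)
    (hv : ∀ i ∈ s, ‖v i‖ ≤ V) (hv' : ∀ i ∈ s, ‖v' i‖ ≤ V)
    (G : Finset ι)
    (hG : ∀ i ∈ s ∩ G, |w i - w' i| ≤ ω ∧ ‖v i - v' i‖ ≤ ω)
    (hbad : ((s \ G).card : ℝ) ≤ η * s.card) :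
    ‖(∑ i ∈ s, w i)⁻¹ • ∑ i ∈ s, w i • v i
        - (∑ i ∈ s, w' i)⁻¹ • ∑ i ∈ s, w' i • v' i‖
      ≤ ω * ((V + M) / m + M * V / m ^ 2) + η * (3 * M * V / m + M * M * V / m ^ 2) := by
  set n : ℝ := (s.card : ℝ) with hn
  have hn0 : 0 < n := by
    rw [hn]
    exact_mod_cast Finset.card_pos.mpr hs
  set S := ∑ i ∈ s, w i with hSdef
  set S' := ∑ i ∈ s, w' i with hS'def
  set N := ∑ i ∈ s, w i • v i with hNdef
  set N' := ∑ i ∈ s, w' i • v' i with hN'def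
  have hM : m ≤ M := le_trans (hw1 _ hs.choose_spec) (hw2 _ hs.choose_spec)
  have hM0 : 0 < M := lt_of_lt_of_le hm hM
  have hSlb : n * m ≤ S := by
    calc n * m = ∑ _i ∈ s, m := by rw [Finset.sum_const, nsmul_eq_mul]
      _ ≤ S := Finset.sum_le_sum hw1
  have hS'lb : n * m ≤ S' := by
    calc n * m = ∑ _i ∈ s, m := by rw [Finset.sum_const, nsmul_eq_mul]
      _ ≤ S' := Finset.sum_le_sum hw1'
  have hSpos : 0 < S := lt_of_lt_of_le (by positivity) hSlb
  have hS'pos : 0 < S' := lt_of_lt_of_le (by positivity) hS'lb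
  have hcardG : ((s ∩ G).card : ℝ) ≤ n := by
    rw [hn]
    exact_mod_cast Finset.card_le_card (Finset.inter_subset_left (s₁ := s) (s₂ := G))
  have hsplit : ∀ f : ι → ℝ, ∑ i ∈ s \ G, f i + ∑ i ∈ s ∩ G, f i = ∑ i ∈ s, f i := by
    intro f
    have := Finset.sum_sdiff (f := f) (Finset.inter_subset_left (s₁ := s) (s₂ := G))
    rwa [Finset.sdiff_inter_self_left] at this
  have key : ∀ (f : ι → ℝ) (a b : ℝ), 0 ≤ a → 0 ≤ b →
      (∀ i ∈ s ∩ G, f i ≤ a) → (∀ i ∈ s \ G, f i ≤ b) →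
      ∑ i ∈ s, f i ≤ n * a + η * n * b := by
    intro f a b ha hb hfa hfb
    rw [← hsplit f]
    have h1 : ∑ i ∈ s ∩ G, f i ≤ ((s ∩ G).card : ℝ) * a := by
      calc ∑ i ∈ s ∩ G, f i ≤ ∑ _i ∈ s ∩ G, a := Finset.sum_le_sum hfa
        _ = _ := by rw [Finset.sum_const, nsmul_eq_mul]
    have h2 : ∑ i ∈ s \ G, f i ≤ ((s \ G).card : ℝ) * b := by
      calc ∑ i ∈ s \ G, f i ≤ ∑ _i ∈ s \ G, b := Finset.sum_le_sum hfb
        _ = _ := by rw [Finset.sum_const, nsmul_eq_mul]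
    have h1' : ((s ∩ G).card : ℝ) * a ≤ n * a := mul_le_mul_of_nonneg_right hcardG ha
    have h2' : ((s \ G).card : ℝ) * b ≤ η * n * b := mul_le_mul_of_nonneg_right hbad hb
    linarith
  have habsw : ∀ i ∈ s, |w i - w' i| ≤ M := by
    intro i hi
    rw [abs_le]
    constructor <;> nlinarith [hw1 i hi, hw2 i hi, hw1' i hi, hw2' i hi]
  have hterm : ∀ i ∈ s, ‖w i • v i - w' i • v' i‖ ≤ |w i - w' i| * ‖v i‖ + M * ‖v i - v' i‖ := by
    intro i hi
    have hid : w i • v i - w' i • v' i = (w i - w' i) • v i + w' i • (v i - v' i) := by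
      rw [sub_smul, smul_sub]; abel
    rw [hid]
    refine (norm_add_le _ _).trans ?_
    rw [norm_smul, norm_smul, Real.norm_eq_abs, Real.norm_eq_abs]
    have h1 : |w' i| ≤ M := by
      rw [abs_of_pos (lt_of_lt_of_le hm (hw1' i hi))]; exact hw2' i hi
    have := mul_le_mul_of_nonneg_right h1 (norm_nonneg (v i - v' i))
    linarith
  have hNN : ‖N - N'‖ ≤ n * (ω * (V + M)) + η * n * (3 * M * V) := by
    have hsum : N - N' = ∑ i ∈ s, (w i • v i - w' i • v' i) := by
      rw [hNdef, hN'def, ← Finset.sum_sub_distrib]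
    rw [hsum]
    refine (norm_sum_le _ _).trans ?_
    refine le_trans (Finset.sum_le_sum hterm) ?_
    refine key _ _ _ (by positivity) (by positivity) ?_ ?_
    · intro i hi
      have his : i ∈ s := Finset.mem_of_mem_inter_left hi
      have h1 := (hG i hi).1
      have h2 := (hG i hi).2
      have h3 := hv i his
      have h4 : |w i - w' i| * ‖v i‖ ≤ ω * V :=
        mul_le_mul h1 h3 (norm_nonneg _) hω
      nlinarith [norm_nonneg (v i - v' i), abs_nonneg (w i - w' i)]
    · intro i hi
      have his : i ∈ s := (Finset.mem_sdiff.mp hi).1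
      have h1 := habsw i his
      have h3 := hv i his
      have h5 : ‖v i - v' i‖ ≤ 2 * V := by
        have := norm_sub_le (v i) (v' i)
        have := hv' i his
        linarith
      have h4 : |w i - w' i| * ‖v i‖ ≤ M * V :=
        mul_le_mul h1 h3 (norm_nonneg _) hM0.le
      nlinarith [norm_nonneg (v i - v' i), abs_nonneg (w i - w' i)]
  have hSS : |S - S'| ≤ n * ω + η * n * M := by
    have hsum : S - S' = ∑ i ∈ s, (w i - w' i) := by
      rw [hSdef, hS'def, Finset.sum_sub_distrib]
    rw [hsum]
    refine (Finset.abs_sum_le_sum_abs _ _).trans ?_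
    have := key (fun i => |w i - w' i|) ω M hω hM0.le
      (fun i hi => (hG i hi).1) (fun i hi => habsw i (Finset.mem_sdiff.mp hi).1)
    linarith
  have hN'b : ‖N'‖ ≤ n * (M * V) := by
    rw [hN'def]
    refine (norm_sum_le _ _).trans ?_
    calc ∑ i ∈ s, ‖w' i • v' i‖ ≤ ∑ _i ∈ s, M * V := by
          refine Finset.sum_le_sum fun i hi => ?_
          rw [norm_smul, Real.norm_eq_abs, abs_of_pos (lt_of_lt_of_le hm (hw1' i hi))]
          exact mul_le_mul (hw2' i hi) (hv' i hi) (norm_nonneg _) hM0.le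
      _ = n * (M * V) := by rw [Finset.sum_const, nsmul_eq_mul]
  have hdecomp : S⁻¹ • N - S'⁻¹ • N' = S⁻¹ • (N - N') + (S⁻¹ - S'⁻¹) • N' := by
    rw [smul_sub, sub_smul]; abel
  rw [hdecomp]
  have hSinv : S⁻¹ ≤ (n * m)⁻¹ := inv_anti₀ (by positivity) hSlb
  have hinvdiff : |S⁻¹ - S'⁻¹| ≤ (n * ω + η * n * M) * ((n * m)⁻¹ * (n * m)⁻¹) := by
    have hid : S⁻¹ - S'⁻¹ = (S' - S) * (S⁻¹ * S'⁻¹) := by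
      rw [inv_sub_inv hSpos.ne' hS'pos.ne', div_eq_mul_inv, mul_inv]
    rw [hid, abs_mul, abs_mul, abs_of_pos (inv_pos.mpr hSpos), abs_of_pos (inv_pos.mpr hS'pos),
      abs_sub_comm]
    have hS'inv : S'⁻¹ ≤ (n * m)⁻¹ := inv_anti₀ (by positivity) hS'lb
    have h1 : S⁻¹ * S'⁻¹ ≤ (n * m)⁻¹ * (n * m)⁻¹ :=
      mul_le_mul hSinv hS'inv (inv_pos.mpr hS'pos).le (by positivity)
    exact mul_le_mul hSS h1 (by positivity) (by positivity)
  have t1 : ‖S⁻¹ • (N - N')‖ ≤ (n * m)⁻¹ * (n * (ω * (V + M)) + η * n * (3 * M * V)) := by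
    rw [norm_smul, Real.norm_eq_abs, abs_of_pos (inv_pos.mpr hSpos)]
    exact mul_le_mul hSinv hNN (norm_nonneg _) (by positivity)
  have t2 : ‖(S⁻¹ - S'⁻¹) • N'‖ ≤
      (n * ω + η * n * M) * ((n * m)⁻¹ * (n * m)⁻¹) * (n * (M * V)) := by
    rw [norm_smul, Real.norm_eq_abs]
    exact mul_le_mul hinvdiff hN'b (norm_nonneg _) (by positivity)
  refine (norm_add_le _ _).trans ?_
  have heq : (n * m)⁻¹ * (n * (ω * (V + M)) + η * n * (3 * M * V)) +
      (n * ω + η * n * M) * ((n * m)⁻¹ * (n * m)⁻¹) * (n * (M * V)) =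
      ω * ((V + M) / m + M * V / m ^ 2) + η * (3 * M * V / m + M * M * V / m ^ 2) := by
    have hm' : m ≠ 0 := hm.ne'
    have hn' : n ≠ 0 := hn0.ne'
    field_simp
    ring
  linarith [t1, t2]



lemma counting_tail {n : ℕ} (ε δ η : ℝ) (hε : 0 < ε) (hδ0 : 0 < δ) (hη0 : 0 < η)
    (hd5 : δ ≤ ε * η / (2 * (η + 1)))
    (Gset : Finset (Fin (n+1)))
    (hBadCount : ((Finset.univ \ Gset).card : ℝ) ≤ 2*δ*((n:ℝ)+1))
    (f : Fin (n+1) → ℝ)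
    (key : ∀ j : Fin (n+1), j ∈ Gset →
      ((Finset.univ \ Gset).card : ℝ) ≤ η * (((j:ℕ):ℝ)+1) → f j ≤ ε) :
    (1 - ε) * (((n+1 : ℕ)) : ℝ) ≤ ((Finset.univ.filter (fun j => f j ≤ ε)).card : ℝ) := by
  classical
  set Good : Finset (Fin (n+1)) := Finset.univ.filter (fun j => f j ≤ ε) with hGood
  set T : Finset (Fin (n+1)) :=
    Finset.univ.filter (fun j => ¬ (((Finset.univ \ Gset).card : ℝ) ≤ η * (((j:ℕ):ℝ)+1)))
    with hTdef
  have hcu : ((Finset.univ : Finset (Fin (n+1))).card : ℝ) = (n:ℝ)+1 := by simp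
  have hsubbad : Finset.univ \ Good ⊆ (Finset.univ \ Gset) ∪ T := by
    intro j hj
    rw [Finset.mem_sdiff] at hj
    by_contra hcon
    rw [Finset.mem_union] at hcon
    push_neg at hcon
    obtain ⟨h1', h2'⟩ := hcon
    have hjG : j ∈ Gset := by
      by_contra h
      exact h1' (Finset.mem_sdiff.mpr ⟨Finset.mem_univ _, h⟩)
    have hjc : ((Finset.univ \ Gset).card : ℝ) ≤ η * (((j:ℕ):ℝ)+1) := by
      by_contra h
      exact h2' (by rw [hTdef, Finset.mem_filter]; exact ⟨Finset.mem_univ _, h⟩)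
    refine hj.2 ?_
    rw [hGood, Finset.mem_filter]
    exact ⟨Finset.mem_univ _, key j hjG hjc⟩
  set t0 : ℕ := Nat.floor (((Finset.univ \ Gset).card : ℝ) / η) with ht0
  have hTsub : T ⊆ Finset.univ.filter (fun j : Fin (n+1) => (j:ℕ) < t0) := by
    intro j hj
    rw [hTdef, Finset.mem_filter] at hj
    push_neg at hj
    refine Finset.mem_filter.mpr ⟨Finset.mem_univ _, ?_⟩
    have h1 : ((j:ℕ):ℝ) + 1 ≤ ((Finset.univ \ Gset).card : ℝ) / η := by
      rw [le_div_iff₀ hη0]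
      nlinarith [hj.2]
    have h2 : (j:ℕ) + 1 ≤ t0 := Nat.le_floor (by push_cast; linarith)
    omega
  have hTcard : (T.card : ℝ) ≤ ((Finset.univ \ Gset).card : ℝ) / η := by
    have h1 : T.card ≤ t0 := by
      refine le_trans (Finset.card_le_card hTsub) ?_
      calc (Finset.univ.filter (fun j : Fin (n+1) => (j:ℕ) < t0)).card
          ≤ (Finset.range t0).card := Finset.card_le_card_of_injOn (fun j => (j:ℕ))
            (fun j hj => Finset.mem_range.mpr (Finset.mem_filter.mp hj).2)
            (fun a _ b _ h => Fin.val_injective h)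
        _ = t0 := Finset.card_range t0
    calc (T.card : ℝ) ≤ (t0 : ℝ) := by exact_mod_cast h1
      _ ≤ _ := Nat.floor_le (by positivity)
  have hkey0 : 2*δ + 2*δ/η ≤ ε := by
    have h5' : δ * (2*(η+1)) ≤ ε * η := by
      rw [← le_div_iff₀ (by positivity)]
      exact hd5
    have h6 : 2*δ*η + 2*δ ≤ ε*η := by nlinarith
    have h7 : 2*δ + 2*δ/η = (2*δ*η + 2*δ)/η := by
      field_simp
    rw [h7, div_le_iff₀ hη0]
    linarith
  have hbadGood : ((Finset.univ \ Good).card : ℝ) ≤ ε * ((n:ℝ)+1) := by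
    have h1 : ((Finset.univ \ Good).card : ℝ) ≤
        ((Finset.univ \ Gset).card : ℝ) + (T.card : ℝ) := by
      calc ((Finset.univ \ Good).card : ℝ)
          ≤ (((Finset.univ \ Gset) ∪ T).card : ℝ) := by
            exact_mod_cast Finset.card_le_card hsubbad
        _ ≤ _ := by exact_mod_cast Finset.card_union_le _ _
    have hT2 : (T.card : ℝ) ≤ 2*δ*((n:ℝ)+1)/η := by
      refine le_trans hTcard ?_
      gcongr
    have hfin : 2*δ*((n:ℝ)+1) + 2*δ*((n:ℝ)+1)/η ≤ ε * ((n:ℝ)+1) := by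
      have heq2 : 2*δ*((n:ℝ)+1) + 2*δ*((n:ℝ)+1)/η = (2*δ + 2*δ/η)*((n:ℝ)+1) := by
        ring
      rw [heq2]
      have hn1 : (0:ℝ) ≤ (n:ℝ)+1 := by positivity
      nlinarith
    linarith [hBadCount]
  have hsplitG : ((Finset.univ \ Good).card : ℝ) + (Good.card : ℝ) = (n:ℝ)+1 := by
    rw [← hcu, ← Nat.cast_add]
    exact_mod_cast Finset.card_sdiff_add_card_eq_card (Finset.subset_univ Good)
  push_cast
  nlinarith [hbadGood, hsplitG]


set_option maxHeartbeats 4000000 in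
/-- **Main lemma.** Global similarity together with last-position similarity is preserved
through a decoder-only attention layer with compact positional encoding. -/
theorem attention_layer_sim_preserved {d : ℕ} (L : AttentionLayer d) (hL : L.CompactPE)
    (K : Set (Fin d → ℝ)) (hK : IsCompact K) :
    ∀ ε : ℝ, 0 < ε → ∃ δ : ℝ, 0 < δ ∧ ∀ (n : ℕ) (x y : Fin (n + 1) → (Fin d → ℝ)),
      (∀ i, x i ∈ K) → (∀ i, y i ∈ K) →
      simDist x y ≤ δ → ‖x (Fin.last n) - y (Fin.last n)‖ ≤ δ →
      simDist (L.apply x) (L.apply y) ≤ ε ∧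
        ‖L.apply x (Fin.last n) - L.apply y (Fin.last n)‖ ≤ ε := by
  intro ε hε

  classical
  obtain ⟨Kp, hKpc, hPE⟩ := hL
  -- a big compact ball containing everything
  obtain ⟨R0, hR0⟩ := (hK.union hKpc).isBounded.subset_closedBall 0
  set R : ℝ := max R0 0 with hRdef
  set B : Set (Fin d → ℝ) := Metric.closedBall 0 R with hBdef
  have hBc : IsCompact B := isCompact_closedBall 0 R
  have hKB : K ⊆ B := fun z hz => Metric.closedBall_subset_closedBall (le_max_left _ _)
    (hR0 (Set.mem_union_left _ hz))
  have hKpB : Kp ⊆ B := fun z hz => Metric.closedBall_subset_closedBall (le_max_left _ _)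
    (hR0 (Set.mem_union_right _ hz))
  have hB0 : (0 : Fin d → ℝ) ∈ B := Metric.mem_closedBall_self (le_max_right _ _)
  have hBne : B.Nonempty := ⟨0, hB0⟩
  -- compact triple set
  set B3 : Set ((Fin d → ℝ) × (Fin d → ℝ) × (Fin d → ℝ)) := B ×ˢ B ×ˢ B with hB3def
  have hB3c : IsCompact B3 := hBc.prod (hBc.prod hBc)
  have hB3ne : B3.Nonempty := ⟨(0, 0, 0), hB0, hB0, hB0⟩
  -- min and max of w on B3
  obtain ⟨tmin, htminB, htmin⟩ := hB3c.exists_isMinOn hB3ne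
    (L.w_cont.continuousOn (s := B3))
  obtain ⟨tmax, htmaxB, htmax⟩ := hB3c.exists_isMaxOn hB3ne
    (L.w_cont.continuousOn (s := B3))
  set m : ℝ := L.w tmin.1 tmin.2.1 tmin.2.2 with hmdef
  set M : ℝ := L.w tmax.1 tmax.2.1 tmax.2.2 with hMdef
  have hm : 0 < m := L.w_pos _ _ _
  have hwlb : ∀ a ∈ B, ∀ b ∈ B, ∀ c ∈ B, m ≤ L.w a b c := by
    intro a ha b hb c hc
    exact isMinOn_iff.mp htmin (a, b, c) ⟨ha, hb, hc⟩
  have hwub : ∀ a ∈ B, ∀ b ∈ B, ∀ c ∈ B, L.w a b c ≤ M := by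
    intro a ha b hb c hc
    exact isMaxOn_iff.mp htmax (a, b, c) ⟨ha, hb, hc⟩
  have hM0 : 0 < M := lt_of_lt_of_le hm (by
    have := hwlb 0 hB0 0 hB0 0 hB0
    have := hwub 0 hB0 0 hB0 0 hB0
    linarith)
  -- max of ‖val‖ on B
  obtain ⟨zmax, hzmaxB, hzmax⟩ := hBc.exists_isMaxOn hBne
    ((L.val_cont.norm).continuousOn (s := B))
  set V : ℝ := ‖L.val zmax‖ with hVdef
  have hV0 : 0 ≤ V := norm_nonneg _
  have hvub : ∀ a ∈ B, ‖L.val a‖ ≤ V := fun a ha => isMaxOn_iff.mp hzmax a ha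
  clear_value m M V
  -- uniform continuity of F on (closedBall 0 V) ×ˢ B
  have hVBc : IsCompact ((Metric.closedBall (0 : Fin d → ℝ) V) ×ˢ B) :=
    (isCompact_closedBall 0 V).prod hBc
  obtain ⟨δF, hδF, hFu⟩ := Metric.uniformContinuousOn_iff_le.mp
    (hVBc.uniformContinuousOn_of_continuous L.F_cont.continuousOn) ε hε
  -- the attention error budget
  set A : ℝ := (V + M) / m + M * V / m ^ 2 with hAdef
  set Bc : ℝ := 3 * M * V / m + M * M * V / m ^ 2 with hBcdef
  have hA0 : 0 ≤ A := by positivity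
  have hBc0 : 0 ≤ Bc := by positivity
  set ω : ℝ := δF / (2 * (A + 1)) with hωdef
  set η : ℝ := δF / (2 * (Bc + 1)) with hηdef
  have hω0 : 0 < ω := by positivity
  have hη0 : 0 < η := by positivity
  have hbudget : ω * A + η * Bc ≤ δF := by
    have hA1 : A + 1 ≠ 0 := by positivity
    have hBc1 : Bc + 1 ≠ 0 := by positivity
    have h1 : ω * A ≤ δF / 2 := by
      have : ω * (A + 1) = δF / 2 := by
        rw [hωdef]
        field_simp
      nlinarith
    have h2 : η * Bc ≤ δF / 2 := by
      have : η * (Bc + 1) = δF / 2 := by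
        rw [hηdef]
        field_simp
      nlinarith
    calc ω * A + η * Bc ≤ δF / 2 + δF / 2 := add_le_add h1 h2
      _ = δF := by ring
  clear_value A Bc ω η
  -- uniform continuity of w and val
  obtain ⟨θw, hθw, hwu⟩ := Metric.uniformContinuousOn_iff_le.mp
    (hB3c.uniformContinuousOn_of_continuous L.w_cont.continuousOn) ω hω0
  obtain ⟨θv, hθv, hvu⟩ := Metric.uniformContinuousOn_iff_le.mp
    (hBc.uniformContinuousOn_of_continuous L.val_cont.continuousOn) ω hω0
  -- the final δ
  refine ⟨min (min (θw / 2) (θv / 2)) (min (δF / 2) (min (η / 2) (ε * η / (2 * (η + 1))))),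
    by positivity, ?_⟩
  set δ : ℝ := min (min (θw / 2) (θv / 2)) (min (δF / 2) (min (η / 2) (ε * η / (2 * (η + 1)))))
    with hδdef
  have hδ0 : 0 < δ := by rw [hδdef]; positivity
  have hd1 : δ ≤ θw / 2 := le_trans (min_le_left _ _) (min_le_left _ _)
  have hd2 : δ ≤ θv / 2 := le_trans (min_le_left _ _) (min_le_right _ _)
  have hd3 : δ ≤ δF / 2 := le_trans (min_le_right _ _) (min_le_left _ _)
  have hd4 : δ ≤ η / 2 := le_trans (min_le_right _ _) (le_trans (min_le_right _ _) (min_le_left _ _))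
  have hd5 : δ ≤ ε * η / (2 * (η + 1)) :=
    le_trans (min_le_right _ _) (le_trans (min_le_right _ _) (min_le_right _ _))
  clear_value δ
  intro n x y hx hy hsim hlast
  set Gset : Finset (Fin (n+1)) := Finset.univ.filter (fun i => ‖x i - y i‖ ≤ 2*δ) with hGdef
  have hGmem : ∀ i ∈ Gset, ‖x i - y i‖ ≤ 2*δ := by
    intro i hi
    rw [hGdef, Finset.mem_filter] at hi
    exact hi.2
  have hGcard : (1 - 2*δ) * ((n:ℝ)+1) ≤ (Gset.card : ℝ) := by
    have h := simDist_extract x y hsim (by linarith : δ < 2*δ)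
    rw [← hGdef] at h
    push_cast at h
    exact h
  have hcu : ((Finset.univ : Finset (Fin (n+1))).card : ℝ) = (n:ℝ)+1 := by
    simp
  have hsplitB : ((Finset.univ \ Gset).card : ℝ) + (Gset.card : ℝ) = (n:ℝ)+1 := by
    rw [← hcu, ← Nat.cast_add]
    exact_mod_cast Finset.card_sdiff_add_card_eq_card (Finset.subset_univ Gset)
  have hBadCount : ((Finset.univ \ Gset).card : ℝ) ≤ 2*δ * ((n:ℝ)+1) := by
    nlinarith [hGcard, hsplitB]
  -- key claim: good positions are preserved
  have key : ∀ j : Fin (n+1), j ∈ Gset →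
      ((Finset.univ \ Gset).card : ℝ) ≤ η * (((j:ℕ):ℝ)+1) →
      ‖L.apply x j - L.apply y j‖ ≤ ε := by
    intro j hjG hjcond
    have hxB : ∀ i, x i ∈ B := fun i => hKB (hx i)
    have hyB : ∀ i, y i ∈ B := fun i => hKB (hy i)
    set s : Finset (Fin (n+1)) := Finset.Iic j with hsdef
    have hs : s.Nonempty := ⟨j, Finset.mem_Iic.mpr le_rfl⟩
    set wx := fun i : Fin (n+1) => L.w (x i) (x j) (L.p i.val j.val) with hwx
    set wy := fun i : Fin (n+1) => L.w (y i) (y j) (L.p i.val j.val) with hwy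
    set vx := fun i : Fin (n+1) => L.val (x i) with hvx
    set vy := fun i : Fin (n+1) => L.val (y i) with hvy
    have hpB : ∀ i : Fin (n+1), L.p i.val j.val ∈ B := fun i => hKpB (hPE _ _)
    have hxj : ‖x j - y j‖ ≤ 2*δ := hGmem j hjG
    have hattnx : L.attn x j = (∑ i ∈ s, wx i)⁻¹ • ∑ i ∈ s, wx i • vx i := rfl
    have hattny : L.attn y j = (∑ i ∈ s, wy i)⁻¹ • ∑ i ∈ s, wy i • vy i := rfl
    have hattn : ‖L.attn x j - L.attn y j‖ ≤ ω * A + η * Bc := by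
      rw [hattnx, hattny, hAdef, hBcdef]
      refine avg_diff s hs wx wy vx vy m M V ω η hm hω0.le hη0.le hV0
        (fun i _ => hwlb _ (hxB i) _ (hxB j) _ (hpB i))
        (fun i _ => hwub _ (hxB i) _ (hxB j) _ (hpB i))
        (fun i _ => hwlb _ (hyB i) _ (hyB j) _ (hpB i))
        (fun i _ => hwub _ (hyB i) _ (hyB j) _ (hpB i))
        (fun i _ => hvub _ (hxB i)) (fun i _ => hvub _ (hyB i))
        Gset ?_ ?_
      · intro i hi
        have hiG : i ∈ Gset := Finset.mem_of_mem_inter_right hi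
        have hxyi : ‖x i - y i‖ ≤ 2*δ := hGmem i hiG
        constructor
        · have h := hwu (x i, x j, L.p i.val j.val) ⟨hxB i, hxB j, hpB i⟩
            (y i, y j, L.p i.val j.val) ⟨hyB i, hyB j, hpB i⟩ ?_
          · rw [Real.dist_eq] at h
            exact h
          · rw [Prod.dist_eq, Prod.dist_eq]
            simp only [dist_self]
            rw [dist_eq_norm, dist_eq_norm]
            exact max_le (by linarith) (max_le (by linarith) (by linarith))
        · have h := hvu (x i) (hxB i) (y i) (hyB i) ?_
          · rw [dist_eq_norm] at h
            exact h
          · rw [dist_eq_norm]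
            linarith
      · have hsub2 : s \ Gset ⊆ Finset.univ \ Gset :=
          Finset.sdiff_subset_sdiff (Finset.subset_univ _) (Finset.Subset.refl _)
        have hc := Finset.card_le_card hsub2
        have hscard : (s.card : ℝ) = ((j:ℕ):ℝ)+1 := by
          rw [hsdef, Fin.card_Iic]
          push_cast
          ring
        calc ((s \ Gset).card : ℝ) ≤ ((Finset.univ \ Gset).card : ℝ) := by exact_mod_cast hc
          _ ≤ η * (((j:ℕ):ℝ)+1) := hjcond
          _ = η * s.card := by rw [hscard]
    have hattn2 : ‖L.attn x j - L.attn y j‖ ≤ δF := le_trans hattn hbudget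
    have haxV : L.attn x j ∈ Metric.closedBall (0 : Fin d → ℝ) V := by
      rw [Metric.mem_closedBall, dist_eq_norm, sub_zero, hattnx]
      exact avg_norm_le s hs wx vx hm (fun i _ => hwlb _ (hxB i) _ (hxB j) _ (hpB i))
        (fun i _ => hvub _ (hxB i))
    have hayV : L.attn y j ∈ Metric.closedBall (0 : Fin d → ℝ) V := by
      rw [Metric.mem_closedBall, dist_eq_norm, sub_zero, hattny]
      exact avg_norm_le s hs wy vy hm (fun i _ => hwlb _ (hyB i) _ (hyB j) _ (hpB i))
        (fun i _ => hvub _ (hyB i))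
    have h := hFu (L.attn x j, x j) ⟨haxV, hxB j⟩ (L.attn y j, y j) ⟨hayV, hyB j⟩ ?_
    · rw [dist_eq_norm] at h
      exact h
    · rw [Prod.dist_eq, dist_eq_norm, dist_eq_norm]
      exact max_le hattn2 (by linarith)
  -- last position
  have hlast' : ‖L.apply x (Fin.last n) - L.apply y (Fin.last n)‖ ≤ ε := by
    refine key (Fin.last n) ?_ ?_
    · rw [hGdef, Finset.mem_filter]
      exact ⟨Finset.mem_univ _, by linarith⟩
    · rw [Fin.val_last]
      calc ((Finset.univ \ Gset).card : ℝ) ≤ 2*δ*((n:ℝ)+1) := hBadCount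
        _ ≤ η*((n:ℝ)+1) := by nlinarith [Nat.cast_nonneg (α := ℝ) n]
  refine ⟨?_, hlast'⟩
  refine simDist_le _ _ hε.le ?_
  exact counting_tail ε δ η hε hδ0 hη0 hd5 Gset hBadCount
    (fun j => ‖L.apply x j - L.apply y j‖) key
end

section
/- Let Σ be a finite alphabet, let T be a compact decoder-only Transformer over Σ, and let α, α̂ ∈ Σ^ω be infinite sequences that differ in only finitely many positions. Then T eventually learns α if and only if T eventually learns α̂. -/
open Finset Filter

lemma sum_split_bound {n : ℕ} (j : Fin n) (g : Fin n → ℝ) (B s : ℝ) (N : ℕ)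
    (hs0 : 0 ≤ s) (hB0 : 0 ≤ B) (hB : ∀ i ∈ Finset.Iic j, g i ≤ B)
    (hs : ∀ i ∈ Finset.Iic j, N ≤ (i : ℕ) → g i ≤ s) :
    ∑ i ∈ Finset.Iic j, g i ≤ ((j : ℕ) + 1) * s + N * B := by
  have key : ∑ i ∈ Finset.Iic j, g i ≤
      ∑ i ∈ Finset.Iic j, (s + if (i : ℕ) < N then B else 0) := by
    refine Finset.sum_le_sum fun i hi => ?_
    by_cases h : (i : ℕ) < N
    · simp only [h, if_pos]
      have := hB i hi; linarith
    · simp only [h, if_neg, not_false_iff, add_zero]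
      exact hs i hi (not_lt.mp h)
  have card_le : ((Finset.Iic j).filter (fun i : Fin n => (i : ℕ) < N)).card ≤ N := by
    have : ((Finset.Iic j).filter (fun i : Fin n => (i : ℕ) < N)).card ≤
        (Finset.range N).card := by
      refine Finset.card_le_card_of_injOn (fun i => (i : ℕ)) ?_ ?_
      · intro i hi
        simp only [Finset.mem_coe, Finset.mem_filter] at hi
        simpa using hi.2
      · intro a _ b _ hab; exact Fin.val_injective hab
    simpa using this
  have sum_ite : ∑ i ∈ Finset.Iic j, (if (i : ℕ) < N then B else (0:ℝ)) =
      ((Finset.Iic j).filter (fun i : Fin n => (i : ℕ) < N)).card * B := by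
    rw [← Finset.sum_filter]
    simp [mul_comm]
  calc ∑ i ∈ Finset.Iic j, g i ≤ _ := key
    _ = ((Finset.Iic j).card : ℝ) * s +
        ((Finset.Iic j).filter (fun i : Fin n => (i : ℕ) < N)).card * B := by
        rw [Finset.sum_add_distrib, sum_ite, Finset.sum_const, nsmul_eq_mul]
    _ ≤ ((j : ℕ) + 1) * s + N * B := by
        rw [Fin.card_Iic]
        push_cast
        have := mul_le_mul_of_nonneg_right (show (((Finset.Iic j).filter (fun i : Fin n => (i : ℕ) < N)).card : ℝ) ≤ N by exact_mod_cast card_le) hB0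
        linarith

lemma attn_norm_le {d : ℕ} (L : AttentionLayer d) {n : ℕ} (x : Fin n → (Fin d → ℝ))
    (j : Fin n) (D : ℝ) (hD : ∀ i, ‖L.val (x i)‖ ≤ D) : ‖L.attn x j‖ ≤ D := by
  set W := ∑ i ∈ Finset.Iic j, L.w (x i) (x j) (L.p i.val j.val) with hW
  have hW0 : 0 < W := by
    apply Finset.sum_pos (fun i _ => L.w_pos _ _ _) ⟨j, Finset.mem_Iic.mpr le_rfl⟩
  have hS : ‖∑ i ∈ Finset.Iic j, L.w (x i) (x j) (L.p i.val j.val) • L.val (x i)‖ ≤ W * D := by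
    calc ‖∑ i ∈ Finset.Iic j, L.w (x i) (x j) (L.p i.val j.val) • L.val (x i)‖
        ≤ ∑ i ∈ Finset.Iic j, ‖L.w (x i) (x j) (L.p i.val j.val) • L.val (x i)‖ :=
          norm_sum_le _ _
      _ ≤ ∑ i ∈ Finset.Iic j, L.w (x i) (x j) (L.p i.val j.val) * D := by
          refine Finset.sum_le_sum fun i _ => ?_
          rw [norm_smul, Real.norm_eq_abs, abs_of_pos (L.w_pos _ _ _)]
          exact mul_le_mul_of_nonneg_left (hD i) (L.w_pos _ _ _).le
      _ = W * D := by rw [hW, Finset.sum_mul]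
  rw [AttentionLayer.attn, norm_smul, Real.norm_eq_abs, abs_of_pos (inv_pos.mpr hW0)]
  calc W⁻¹ * ‖_‖ ≤ W⁻¹ * (W * D) := by
        exact mul_le_mul_of_nonneg_left hS (inv_pos.mpr hW0).le
    _ = D := by field_simp


lemma inv_smul_sub_bound {d : ℕ} (W W' DD Sn Sw : ℝ) (S S' : Fin d → ℝ)
    (hW0 : 0 < W) (hW'0 : 0 < W')
    (hSS' : ‖S - S'‖ ≤ Sn) (hWW' : |W - W'| ≤ Sw) (hS'n : ‖S'‖ ≤ W' * DD)
    (hD0 : 0 ≤ DD) :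
    ‖W⁻¹ • S - W'⁻¹ • S'‖ ≤ (Sn + Sw * DD) / W := by
  have hid : W⁻¹ • S - W'⁻¹ • S' = W⁻¹ • (S - S') + (W⁻¹ - W'⁻¹) • S' := by module
  have habs : |W⁻¹ - W'⁻¹| = |W - W'| / (W * W') := by
    rw [show W⁻¹ - W'⁻¹ = (W' - W) / (W * W') by field_simp, abs_div,
      abs_of_pos (mul_pos hW0 hW'0), abs_sub_comm]
  have hterm2 : |W⁻¹ - W'⁻¹| * ‖S'‖ ≤ Sw * DD / W := by
    calc |W⁻¹ - W'⁻¹| * ‖S'‖ ≤ (|W - W'| / (W * W')) * (W' * DD) := by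
          rw [habs]
          exact mul_le_mul_of_nonneg_left hS'n (by positivity)
      _ = |W - W'| * DD / W := by field_simp
      _ ≤ Sw * DD / W := by gcongr
  rw [hid]
  calc ‖W⁻¹ • (S - S') + (W⁻¹ - W'⁻¹) • S'‖
      ≤ ‖W⁻¹ • (S - S')‖ + ‖(W⁻¹ - W'⁻¹) • S'‖ := norm_add_le _ _
    _ = W⁻¹ * ‖S - S'‖ + |W⁻¹ - W'⁻¹| * ‖S'‖ := by
        rw [norm_smul, norm_smul, Real.norm_eq_abs, Real.norm_eq_abs,
          abs_of_pos (inv_pos.mpr hW0)]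
    _ ≤ Sn / W + Sw * DD / W := by
        gcongr
        rw [inv_mul_eq_div]
        gcongr
    _ = (Sn + Sw * DD) / W := by ring

lemma div_split (s c NB J : ℝ) (hc : c ≠ 0) (hJ : J ≠ 0) :
    (J * s + NB) / (J * c) = s / c + NB / (J * c) := by
  field_simp

set_option maxHeartbeats 2000000 in
lemma layer_key {d : ℕ} (L : AttentionLayer d) (hL : L.CompactPE)
    (K : Set (Fin d → ℝ)) (hK : IsCompact K) :
    ∃ K' : Set (Fin d → ℝ), IsCompact K' ∧
      (∀ (n : ℕ) (x : Fin n → Fin d → ℝ), (∀ i, x i ∈ K) → ∀ j, L.apply x j ∈ K') ∧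
      ∀ ε : ℝ, 0 < ε → ∃ δ : ℝ, 0 < δ ∧ ∀ N : ℕ, ∃ M : ℕ, N ≤ M ∧
        ∀ (n : ℕ) (x x' : Fin n → Fin d → ℝ), (∀ i, x i ∈ K) → (∀ i, x' i ∈ K) →
          (∀ i : Fin n, N ≤ (i : ℕ) → ‖x i - x' i‖ ≤ δ) →
          ∀ j : Fin n, M ≤ (j : ℕ) → ‖L.apply x j - L.apply x' j‖ ≤ ε := by
  classical
  obtain ⟨Kp, hKp, hp⟩ := hL
  set K₁ : Set (Fin d → ℝ) := insert 0 K with hK₁def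
  have hK₁ : IsCompact K₁ := hK.insert 0
  have hKsub : K ⊆ K₁ := Set.subset_insert _ _
  set S3 : Set ((Fin d → ℝ) × (Fin d → ℝ) × (Fin d → ℝ)) := K₁ ×ˢ K₁ ×ˢ Kp with hS3def
  have hS3 : IsCompact S3 := hK₁.prod (hK₁.prod hKp)
  have hS3ne : S3.Nonempty := ⟨(0, 0, L.p 0 0), Set.mem_insert _ _,
    Set.mem_insert _ _, hp 0 0⟩
  obtain ⟨tc, htc, hmin⟩ := hS3.exists_isMinOn hS3ne L.w_cont.continuousOn
  obtain ⟨tC, htC, hmax⟩ := hS3.exists_isMaxOn hS3ne L.w_cont.continuousOn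
  set c : ℝ := L.w tc.1 tc.2.1 tc.2.2 with hcdef
  set C : ℝ := L.w tC.1 tC.2.1 tC.2.2 with hCdef
  have hc0 : 0 < c := L.w_pos _ _ _
  have hwmem : ∀ (a b : Fin d → ℝ) (i j : ℕ), a ∈ K₁ → b ∈ K₁ →
      (a, b, L.p i j) ∈ S3 := fun a b i j ha hb => ⟨ha, hb, hp i j⟩
  have hwlb : ∀ (a b : Fin d → ℝ) (i j : ℕ), a ∈ K₁ → b ∈ K₁ →
      c ≤ L.w a b (L.p i j) := fun a b i j ha hb => hmin (hwmem a b i j ha hb)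
  have hwub : ∀ (a b : Fin d → ℝ) (i j : ℕ), a ∈ K₁ → b ∈ K₁ →
      L.w a b (L.p i j) ≤ C := fun a b i j ha hb => hmax (hwmem a b i j ha hb)
  have hcC : c ≤ C := hmax htc
  have hC0 : 0 < C := lt_of_lt_of_le hc0 hcC
  have hV : IsCompact (L.val '' K₁) := hK₁.image L.val_cont
  obtain ⟨r, hr⟩ := hV.isBounded.subset_closedBall 0
  set D : ℝ := max r 0 with hDdef
  have hD0 : 0 ≤ D := le_max_right _ _
  have hvD : ∀ z ∈ K₁, ‖L.val z‖ ≤ D := by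
    intro z hz
    have := hr (Set.mem_image_of_mem _ hz)
    rw [Metric.mem_closedBall, dist_zero_right] at this
    exact this.trans (le_max_left _ _)
  have hBall : IsCompact (Metric.closedBall (0 : Fin d → ℝ) D) :=
    isCompact_closedBall _ _
  refine ⟨(fun t : (Fin d → ℝ) × (Fin d → ℝ) => L.F t.1 t.2) ''
    (Metric.closedBall 0 D ×ˢ K₁), (hBall.prod hK₁).image L.F_cont, ?_, ?_⟩
  · intro n x hx j
    exact ⟨(L.attn x j, x j),
      ⟨by simpa [Metric.mem_closedBall, dist_zero_right] using
        attn_norm_le L x j D (fun i => hvD _ (hKsub (hx i))), hKsub (hx j)⟩, rfl⟩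
  · intro ε hε
    obtain ⟨θ, hθ0, hθ⟩ := (Metric.uniformContinuousOn_iff_le.mp
      ((hBall.prod hK₁).uniformContinuousOn_of_continuous L.F_cont.continuousOn)) ε hε
    set εw : ℝ := c * θ / (16 * (D + 1)) with hεwdef
    set εv : ℝ := c * θ / (8 * (C + 1)) with hεvdef
    have hεw0 : 0 < εw := by rw [hεwdef]; positivity
    have hεv0 : 0 < εv := by rw [hεvdef]; positivity
    have hsum_le : 2 * D * εw + C * εv ≤ c * θ / 4 := by
      have h1 : 2 * D * εw ≤ c * θ / 8 := by
        rw [hεwdef, show 2 * D * (c * θ / (16 * (D + 1))) = c * θ * (2 * D / (16 * (D + 1)))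
          by ring]
        have h : 2 * D / (16 * (D + 1)) ≤ 1 / 8 := by
          rw [div_le_div_iff₀ (by positivity) (by norm_num)]; linarith
        calc c * θ * (2 * D / (16 * (D + 1))) ≤ c * θ * (1 / 8) :=
              mul_le_mul_of_nonneg_left h (by positivity)
          _ = c * θ / 8 := by ring
      have h2 : C * εv ≤ c * θ / 8 := by
        rw [hεvdef, show C * (c * θ / (8 * (C + 1))) = c * θ * (C / (8 * (C + 1))) by ring]
        have h : C / (8 * (C + 1)) ≤ 1 / 8 := by
          rw [div_le_div_iff₀ (by positivity) (by norm_num)]; linarith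
        calc c * θ * (C / (8 * (C + 1))) ≤ c * θ * (1 / 8) :=
              mul_le_mul_of_nonneg_left h (by positivity)
          _ = c * θ / 8 := by ring
      linarith
    clear_value εw εv
    clear hεwdef hεvdef
    obtain ⟨θw, hθw0, hθw⟩ := (Metric.uniformContinuousOn_iff_le.mp
      (hS3.uniformContinuousOn_of_continuous L.w_cont.continuousOn)) εw hεw0
    obtain ⟨θv, hθv0, hθv⟩ := (Metric.uniformContinuousOn_iff_le.mp
      (hK₁.uniformContinuousOn_of_continuous L.val_cont.continuousOn)) εv hεv0
    set δ : ℝ := min (min θw θv) (θ / 2) with hδdef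
    have hδ0 : 0 < δ := lt_min (lt_min hθw0 hθv0) (by linarith)
    have hδθw : δ ≤ θw := le_trans (min_le_left _ _) (min_le_left _ _)
    have hδθv : δ ≤ θv := le_trans (min_le_left _ _) (min_le_right _ _)
    have hδθ : δ ≤ θ / 2 := min_le_right _ _
    clear_value δ
    clear hδdef
    refine ⟨δ, hδ0, ?_⟩
    intro N
    set B : ℝ := 4 * C * D with hBdef
    have hB0 : 0 ≤ B := by rw [hBdef]; positivity
    have hBval : ∀ u : ℝ, u ≤ 2 * C * D → ∀ t : ℝ, t ≤ C → 0 ≤ t →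
        u + t * D ≤ B := by
      intro u hu t ht ht0
      have : t * D ≤ C * D := mul_le_mul_of_nonneg_right ht hD0
      rw [hBdef]; linarith
    clear_value B
    clear hBdef
    obtain ⟨M₀, hM₀⟩ := exists_nat_ge (4 * N * B / (c * θ))
    refine ⟨max N M₀, le_max_left _ _, ?_⟩
    intro n x x' hx hx' hclose j hj
    have hxK : ∀ i, x i ∈ K₁ := fun i => hKsub (hx i)
    have hx'K : ∀ i, x' i ∈ K₁ := fun i => hKsub (hx' i)
    have hjN : N ≤ (j : ℕ) := le_trans (le_max_left _ _) hj
    have hjM₀ : M₀ ≤ (j : ℕ) := le_trans (le_max_right _ _) hj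
    set wv : Fin n → ℝ := fun i => L.w (x i) (x j) (L.p i.val j.val) with hwvdef
    set wv' : Fin n → ℝ := fun i => L.w (x' i) (x' j) (L.p i.val j.val) with hwv'def
    set v : Fin n → (Fin d → ℝ) := fun i => L.val (x i) with hvdef
    set v' : Fin n → (Fin d → ℝ) := fun i => L.val (x' i) with hv'def
    set W : ℝ := ∑ i ∈ Finset.Iic j, wv i with hWdef
    set W' : ℝ := ∑ i ∈ Finset.Iic j, wv' i with hW'def
    set S : Fin d → ℝ := ∑ i ∈ Finset.Iic j, wv i • v i with hSdef
    set S' : Fin d → ℝ := ∑ i ∈ Finset.Iic j, wv' i • v' i with hS'def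
    have hax : L.attn x j = W⁻¹ • S := rfl
    have hax' : L.attn x' j = W'⁻¹ • S' := rfl
    have hwv0 : ∀ i, 0 < wv i := fun i => L.w_pos _ _ _
    have hwv'0 : ∀ i, 0 < wv' i := fun i => L.w_pos _ _ _
    have hwvC : ∀ i, c ≤ wv i ∧ wv i ≤ C := fun i =>
      ⟨hwlb _ _ _ _ (hxK i) (hxK j), hwub _ _ _ _ (hxK i) (hxK j)⟩
    have hwv'C : ∀ i, c ≤ wv' i ∧ wv' i ≤ C := fun i =>
      ⟨hwlb _ _ _ _ (hx'K i) (hx'K j), hwub _ _ _ _ (hx'K i) (hx'K j)⟩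
    have hvDi : ∀ i, ‖v i‖ ≤ D := fun i => hvD _ (hxK i)
    have hv'Di : ∀ i, ‖v' i‖ ≤ D := fun i => hvD _ (hx'K i)
    have hwclose : ∀ i : Fin n, N ≤ (i : ℕ) → |wv i - wv' i| ≤ εw := by
      intro i hiN
      have hxi : ‖x i - x' i‖ ≤ δ := hclose i hiN
      have hxj : ‖x j - x' j‖ ≤ δ := hclose j hjN
      have := hθw (x i, x j, L.p i.val j.val) (hwmem _ _ _ _ (hxK i) (hxK j))
        (x' i, x' j, L.p i.val j.val) (hwmem _ _ _ _ (hx'K i) (hx'K j)) ?_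
      · simpa [Real.dist_eq] using this
      · rw [Prod.dist_eq, Prod.dist_eq]
        simp only [dist_self]
        rw [dist_eq_norm, dist_eq_norm]
        exact max_le (hxi.trans hδθw) (max_le (hxj.trans hδθw) (hδ0.le.trans hδθw))
    have hvclose : ∀ i : Fin n, N ≤ (i : ℕ) → ‖v i - v' i‖ ≤ εv := by
      intro i hiN
      have hxi : ‖x i - x' i‖ ≤ δ := hclose i hiN
      have := hθv (x i) (hxK i) (x' i) (hx'K i)
        (by rw [dist_eq_norm]; exact hxi.trans hδθv)
      rw [dist_eq_norm] at this
      exact this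
    have hattnball : ‖L.attn x j‖ ≤ D := attn_norm_le L x j D hvDi
    have hattnball' : ‖L.attn x' j‖ ≤ D := attn_norm_le L x' j D hv'Di
    have hxjK : x j ∈ K₁ := hxK j
    have hx'jK : x' j ∈ K₁ := hx'K j
    have hxjclose : ‖x j - x' j‖ ≤ δ := hclose j hjN
    clear_value wv wv' v v'
    clear hwvdef hwv'def hvdef hv'def hclose hx hx' hxK hx'K
    have hcard : ((Finset.Iic j).card : ℝ) = (j : ℕ) + 1 := by
      rw [Fin.card_Iic]; push_cast; ring
    have hWlb : ((j : ℕ) + 1) * c ≤ W := by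
      rw [hWdef, ← hcard]
      calc ((Finset.Iic j).card : ℝ) * c = ∑ _i ∈ Finset.Iic j, c := by
            rw [Finset.sum_const, nsmul_eq_mul]
        _ ≤ ∑ i ∈ Finset.Iic j, wv i := Finset.sum_le_sum fun i _ => (hwvC i).1
    have hW'lb : ((j : ℕ) + 1) * c ≤ W' := by
      rw [hW'def, ← hcard]
      calc ((Finset.Iic j).card : ℝ) * c = ∑ _i ∈ Finset.Iic j, c := by
            rw [Finset.sum_const, nsmul_eq_mul]
        _ ≤ ∑ i ∈ Finset.Iic j, wv' i := Finset.sum_le_sum fun i _ => (hwv'C i).1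
    have hjpos : (0:ℝ) < (j : ℕ) + 1 := by positivity
    have hW0 : 0 < W := lt_of_lt_of_le (by positivity) hWlb
    have hW'0 : 0 < W' := lt_of_lt_of_le (by positivity) hW'lb
    have hSS' : ‖S - S'‖ ≤ ∑ i ∈ Finset.Iic j, ‖wv i • v i - wv' i • v' i‖ := by
      rw [hSdef, hS'def, ← Finset.sum_sub_distrib]
      exact norm_sum_le _ _
    have hWW' : |W - W'| ≤ ∑ i ∈ Finset.Iic j, |wv i - wv' i| := by
      rw [hWdef, hW'def, ← Finset.sum_sub_distrib]
      exact Finset.abs_sum_le_sum_abs _ _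
    have hS'n : ‖S'‖ ≤ W' * D := by
      rw [hS'def, hW'def]
      calc ‖∑ i ∈ Finset.Iic j, wv' i • v' i‖ ≤ ∑ i ∈ Finset.Iic j, ‖wv' i • v' i‖ :=
            norm_sum_le _ _
        _ ≤ ∑ i ∈ Finset.Iic j, wv' i * D := by
            refine Finset.sum_le_sum fun i _ => ?_
            rw [norm_smul, Real.norm_eq_abs, abs_of_pos (hwv'0 i)]
            exact mul_le_mul_of_nonneg_left (hv'Di i) (hwv'0 i).le
        _ = (∑ i ∈ Finset.Iic j, wv' i) * D := by rw [Finset.sum_mul]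
    clear_value W W' S S'
    clear hWdef hW'def hSdef hS'def
    set g : Fin n → ℝ := fun i => ‖wv i • v i - wv' i • v' i‖ + |wv i - wv' i| * D
      with hgdef
    have hgi : ∀ i, g i = ‖wv i • v i - wv' i • v' i‖ + |wv i - wv' i| * D :=
      fun i => rfl
    have hgsum : ∑ i ∈ Finset.Iic j, g i =
        (∑ i ∈ Finset.Iic j, ‖wv i • v i - wv' i • v' i‖) +
        (∑ i ∈ Finset.Iic j, |wv i - wv' i|) * D := by
      simp only [hgdef]
      rw [Finset.sum_add_distrib, ← Finset.sum_mul]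
    clear_value g
    clear hgdef
    have hg_crude : ∀ i ∈ Finset.Iic j, g i ≤ B := by
      intro i _
      have h1 : |wv i - wv' i| ≤ C := by
        rw [abs_sub_le_iff]
        constructor
        · linarith [(hwvC i).2, (hwv'C i).1, hc0]
        · linarith [(hwv'C i).2, (hwvC i).1, hc0]
      have h2 : ‖wv i • v i - wv' i • v' i‖ ≤ 2 * C * D := by
        calc ‖wv i • v i - wv' i • v' i‖ ≤ ‖wv i • v i‖ + ‖wv' i • v' i‖ :=
              norm_sub_le _ _
          _ ≤ C * D + C * D := by
              gcongr
              · rw [norm_smul, Real.norm_eq_abs, abs_of_pos (hwv0 i)]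
                exact mul_le_mul (hwvC i).2 (hvDi i) (norm_nonneg _) hC0.le
              · rw [norm_smul, Real.norm_eq_abs, abs_of_pos (hwv'0 i)]
                exact mul_le_mul (hwv'C i).2 (hv'Di i) (norm_nonneg _) hC0.le
          _ = 2 * C * D := by ring
      rw [hgi i]
      exact hBval _ h2 _ h1 (abs_nonneg _)
    set s : ℝ := 2 * D * εw + C * εv with hsdef
    have hs0 : 0 ≤ s := by
      rw [hsdef]; positivity
    have hscθ : s ≤ c * θ / 4 := by rw [hsdef]; exact hsum_le
    have hg_fine : ∀ i ∈ Finset.Iic j, N ≤ (i : ℕ) → g i ≤ s := by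
      intro i _ hiN
      have hw := hwclose i hiN
      have hv2 := hvclose i hiN
      have h2 : ‖wv i • v i - wv' i • v' i‖ ≤ εw * D + C * εv := by
        have hid2 : wv i • v i - wv' i • v' i
            = (wv i - wv' i) • v i + wv' i • (v i - v' i) := by module
        rw [hid2]
        calc ‖(wv i - wv' i) • v i + wv' i • (v i - v' i)‖
            ≤ ‖(wv i - wv' i) • v i‖ + ‖wv' i • (v i - v' i)‖ := norm_add_le _ _
          _ ≤ εw * D + C * εv := by
              gcongr
              · rw [norm_smul, Real.norm_eq_abs]
                exact mul_le_mul hw (hvDi i) (norm_nonneg _) hεw0.le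
              · rw [norm_smul, Real.norm_eq_abs, abs_of_pos (hwv'0 i)]
                exact mul_le_mul (hwv'C i).2 hv2 (norm_nonneg _) hC0.le
      have h3 : |wv i - wv' i| * D ≤ εw * D := mul_le_mul_of_nonneg_right hw hD0
      rw [hgi i, hsdef]
      linarith
    clear_value s
    clear hsdef
    have hsum : ∑ i ∈ Finset.Iic j, g i ≤ ((j : ℕ) + 1) * s + N * B :=
      sum_split_bound j g B s N hs0 hB0 hg_crude hg_fine
    have hattn : ‖L.attn x j - L.attn x' j‖ ≤ (∑ i ∈ Finset.Iic j, g i) / W := by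
      rw [hax, hax']
      have key := inv_smul_sub_bound W W' D
        (∑ i ∈ Finset.Iic j, ‖wv i • v i - wv' i • v' i‖)
        (∑ i ∈ Finset.Iic j, |wv i - wv' i|) S S' hW0 hW'0 hSS' hWW' hS'n hD0
      rw [hgsum]
      exact key
    have hstep : (∑ i ∈ Finset.Iic j, g i) / W ≤ s / c + N * B / (((j:ℕ) + 1) * c) := by
      calc (∑ i ∈ Finset.Iic j, g i) / W
          ≤ (((j : ℕ) + 1) * s + N * B) / (((j:ℕ) + 1) * c) :=
            div_le_div₀
              (add_nonneg (mul_nonneg hjpos.le hs0) (mul_nonneg (Nat.cast_nonneg N) hB0))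
              hsum (mul_pos hjpos hc0) hWlb
        _ = s / c + N * B / (((j:ℕ) + 1) * c) :=
            div_split s c ((N:ℝ) * B) (((j:ℕ):ℝ) + 1) hc0.ne' hjpos.ne'
    have hsc : s / c ≤ θ / 4 := by
      rw [div_le_iff₀ hc0]
      calc s ≤ c * θ / 4 := hscθ
        _ = θ / 4 * c := by ring
    have hNB : N * B / (((j:ℕ) + 1) * c) ≤ θ / 4 := by
      have h4 : 4 * N * B ≤ c * θ * M₀ := by
        rw [div_le_iff₀ (by positivity)] at hM₀
        linarith
      have hMj : (M₀ : ℝ) ≤ (j : ℕ) + 1 := by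
        have : (M₀ : ℝ) ≤ (j : ℕ) := Nat.cast_le.mpr hjM₀
        linarith
      rw [div_le_iff₀ (by positivity)]
      have : c * θ * M₀ ≤ c * θ * ((j:ℕ) + 1) :=
        mul_le_mul_of_nonneg_left hMj (by positivity)
      linarith
    have hattn2 : ‖L.attn x j - L.attn x' j‖ ≤ θ / 2 := by
      calc ‖L.attn x j - L.attn x' j‖ ≤ (∑ i ∈ Finset.Iic j, g i) / W := hattn
        _ ≤ s / c + N * B / (((j:ℕ) + 1) * c) := hstep
        _ ≤ θ / 4 + θ / 4 := add_le_add hsc hNB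
        _ = θ / 2 := by ring
    have hmem1 : (L.attn x j, x j) ∈ Metric.closedBall (0 : Fin d → ℝ) D ×ˢ K₁ :=
      ⟨by simpa [Metric.mem_closedBall, dist_zero_right] using hattnball, hxjK⟩
    have hmem2 : (L.attn x' j, x' j) ∈ Metric.closedBall (0 : Fin d → ℝ) D ×ˢ K₁ :=
      ⟨by simpa [Metric.mem_closedBall, dist_zero_right] using hattnball', hx'jK⟩
    have hdist : dist ((L.attn x j, x j)) ((L.attn x' j, x' j)) ≤ θ := by
      rw [Prod.dist_eq]
      apply max_le
      · rw [dist_eq_norm]; linarith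
      · rw [dist_eq_norm]
        calc ‖x j - x' j‖ ≤ δ := hxjclose
          _ ≤ θ / 2 := hδθ
          _ ≤ θ := by linarith
    have hfin := hθ _ hmem1 _ hmem2 hdist
    rw [dist_eq_norm] at hfin
    exact hfin


lemma layers_key {d : ℕ} (Ls : List (AttentionLayer d)) :
    ∀ K : Set (Fin d → ℝ), IsCompact K → (∀ L ∈ Ls, L.CompactPE) →
    ∃ K' : Set (Fin d → ℝ), IsCompact K' ∧
      (∀ (n : ℕ) (x : Fin n → Fin d → ℝ), (∀ i, x i ∈ K) → ∀ j, applyLayers Ls x j ∈ K') ∧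
      ∀ ε : ℝ, 0 < ε → ∃ δ : ℝ, 0 < δ ∧ ∀ N : ℕ, ∃ M : ℕ, N ≤ M ∧
        ∀ (n : ℕ) (x x' : Fin n → Fin d → ℝ), (∀ i, x i ∈ K) → (∀ i, x' i ∈ K) →
          (∀ i : Fin n, N ≤ (i : ℕ) → ‖x i - x' i‖ ≤ δ) →
          ∀ j : Fin n, M ≤ (j : ℕ) →
            ‖applyLayers Ls x j - applyLayers Ls x' j‖ ≤ ε := by
  induction Ls with
  | nil =>
    intro K hK _
    refine ⟨K, hK, fun n x hx j => hx j, fun ε hε => ⟨ε, hε, fun N => ⟨N, le_rfl, ?_⟩⟩⟩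
    intro n x x' hx hx' hclose j hj
    simpa [applyLayers] using hclose j (le_trans hj le_rfl)
  | cons L Ls ih =>
    intro K hK hLs
    obtain ⟨K₁, hK₁, hmem₁, hcont₁⟩ := layer_key L (hLs L (List.mem_cons_self)) K hK
    obtain ⟨K₂, hK₂, hmem₂, hcont₂⟩ :=
      ih K₁ hK₁ (fun L' hL' => hLs L' (List.mem_cons_of_mem _ hL'))
    refine ⟨K₂, hK₂, ?_, ?_⟩
    · intro n x hx j
      have e1 : applyLayers (L :: Ls) x = applyLayers Ls (L.apply x) := rfl
      rw [e1]
      exact hmem₂ n _ (fun i => hmem₁ n x hx i) j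
    · intro ε hε
      obtain ⟨δ₁, hδ₁, h₁⟩ := hcont₂ ε hε
      obtain ⟨δ, hδ, h₂⟩ := hcont₁ δ₁ hδ₁
      refine ⟨δ, hδ, fun N => ?_⟩
      obtain ⟨M₁, hM₁, hM₁p⟩ := h₂ N
      obtain ⟨M, hM, hMp⟩ := h₁ M₁
      refine ⟨M, le_trans hM₁ hM, ?_⟩
      intro n x x' hx hx' hclose j hj
      have e1 : applyLayers (L :: Ls) x = applyLayers Ls (L.apply x) := rfl
      have e2 : applyLayers (L :: Ls) x' = applyLayers Ls (L.apply x') := rfl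
      rw [e1, e2]
      exact hMp n _ _ (fun i => hmem₁ n x hx i) (fun i => hmem₁ n x' hx' i)
        (fun i hi => hM₁p n x x' hx hx' hclose i hi) j hj

lemma eval_close {A : Type*} [Fintype A] {d : ℕ} (T : Transformer A d)
    (hT : T.IsCompactT) (α α' : ℕ → A) (m : ℕ) (hm : ∀ k, m ≤ k → α k = α' k) :
    ∀ η : ℝ, 0 < η → ∃ M : ℕ, ∀ n, M ≤ n → ∀ σ : A,
      |T.eval (fun i : Fin (n+1) => α (i.val+1)) σ -
        T.eval (fun i : Fin (n+1) => α' (i.val+1)) σ| ≤ η := by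
  obtain ⟨⟨Ke, hKe, hKemem⟩, hLpe⟩ := hT
  obtain ⟨K', hK', hmem, hcont⟩ := layers_key T.layers Ke hKe hLpe
  intro η hη
  obtain ⟨ε, hε0, hεp⟩ := Metric.uniformContinuousOn_iff_le.mp
    (hK'.uniformContinuousOn_of_continuous T.proj_cont.continuousOn) η hη
  obtain ⟨δ, hδ0, hN⟩ := hcont ε hε0
  obtain ⟨M, hMm, hMp⟩ := hN m
  refine ⟨M, ?_⟩
  intro n hn σ
  set x : Fin (n+1) → Fin d → ℝ := fun j => T.embed (α (j.val+1)) j.val with hx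
  set x' : Fin (n+1) → Fin d → ℝ := fun j => T.embed (α' (j.val+1)) j.val with hx'
  have hxK : ∀ i, x i ∈ Ke := fun i => hKemem _ _
  have hx'K : ∀ i, x' i ∈ Ke := fun i => hKemem _ _
  have hclose : ∀ i : Fin (n+1), m ≤ (i : ℕ) → ‖x i - x' i‖ ≤ δ := by
    intro i hi
    have heq : α (i.val + 1) = α' (i.val + 1) := hm _ (le_trans hi (Nat.le_succ _))
    simp [hx, hx', heq, hδ0.le]
  have hj : M ≤ ((Fin.last n : Fin (n+1)) : ℕ) := by simpa using hn
  have hkey := hMp (n+1) x x' hxK hx'K hclose (Fin.last n) hj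
  have hyK := hmem (n+1) x hxK (Fin.last n)
  have hy'K := hmem (n+1) x' hx'K (Fin.last n)
  have hproj := hεp _ hyK _ hy'K (by rw [dist_eq_norm]; exact hkey)
  have hcoord := dist_le_pi_dist (T.proj (applyLayers T.layers x (Fin.last n)))
    (T.proj (applyLayers T.layers x' (Fin.last n))) σ
  show |T.proj (applyLayers T.layers x (Fin.last n)) σ -
      T.proj (applyLayers T.layers x' (Fin.last n)) σ| ≤ η
  rw [← Real.dist_eq]
  exact le_trans hcoord hproj

lemma learns_of_learns {A : Type*} [Fintype A] {d : ℕ}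
    (T : Transformer A d) (hT : T.IsCompactT) (α α' : ℕ → A)
    (hfin : {n : ℕ | α n ≠ α' n}.Finite) :
    EventuallyLearns T α → EventuallyLearns T α' := by
  obtain ⟨m, hm⟩ := hfin.bddAbove
  have hagree : ∀ k, m + 1 ≤ k → α k = α' k := by
    intro k hk
    by_contra h
    have := hm h
    omega
  rintro ⟨ε, hε0, n₀, hlearn⟩
  obtain ⟨M, hclose⟩ := eval_close T hT α α' (m+1) hagree (ε/3) (by linarith)
  refine ⟨ε/3, by linarith, max (max n₀ M) (m+1), ?_⟩
  intro n hn σ hσ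
  have hn₀ : n₀ ≤ n := le_trans (le_trans (le_max_left _ _) (le_max_left _ _)) hn
  have hM : M ≤ n := le_trans (le_trans (le_max_right _ _) (le_max_left _ _)) hn
  have hm1 : m + 1 ≤ n := le_trans (le_max_right _ _) hn
  have htar : α (n+2) = α' (n+2) := hagree _ (by omega)
  have h1 := hlearn n hn₀ σ (by rw [htar]; exact hσ)
  have h2 := abs_le.mp (hclose n hM σ)
  have h3 := abs_le.mp (hclose n hM (α (n+2)))
  rw [← htar]
  have g1 := h2.1
  have g2 := h2.2
  have g3 := h3.1
  have g4 := h3.2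
  linarith


/-- **Proposition (finite differences).** Eventual learnability by a compact decoder-only
Transformer is not affected by changing an infinite sequence in finitely many positions. -/
theorem eventuallyLearns_iff_of_finite_diff {A : Type*} [Fintype A] {d : ℕ}
    (T : Transformer A d) (hT : T.IsCompactT) (α α' : ℕ → A)
    (hfin : {n : ℕ | α n ≠ α' n}.Finite) :
    EventuallyLearns T α ↔ EventuallyLearns T α' := by
  constructor
  · exact learns_of_learns T hT α α' hfin
  · refine learns_of_learns T hT α' α ?_
    have : {n : ℕ | α' n ≠ α n} = {n : ℕ | α n ≠ α' n} := by
      ext n; exact ne_comm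
    rw [this]
    exact hfin
end
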